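/- arXiv:1205.1976 — 4 statements merged into one kernel-verified Lean document; each statement's English description precedes it below -/
import Mathlib

section
/- Let f be a transcendental entire function. Suppose that for every R > 0 there exist r > 0, a₀ ∈ ℂ with |a₀| > R, an asymptotic curve Γ' with asymptotic value a₀, a simply connected domain W containing Γ', and an analytic map φ univalent on W, such that φ(Γ') is an interval (−∞, x₀) and f(z) = r·e^{φ(z)} + a₀ for all z ∈ W. Then η_f = 0, where η_f = lim_{R→∞} inf_{|f(z)|>R} |z f'(z)/f(z)|. -/
open Complex Set Metric Filter Topology Bornology
open scoped ENNReal

/-- `f` is a transcendental entire function: entire and not a polynomial. -/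
def TranscEntire (f : ℂ → ℂ) : Prop :=
  Differentiable ℂ f ∧ ¬∃ p : Polynomial ℂ, ∀ z, f z = p.eval z

/-- `a` is a critical value of `f`. -/
def IsCriticalValue (f : ℂ → ℂ) (a : ℂ) : Prop := ∃ w, deriv f w = 0 ∧ f w = a

/-- `a` is a finite asymptotic value of `f`: there is a curve `Γ : (0,1) → ℂ` tending
to `∞` along which `f` tends to `a`. -/
def IsAsymptoticValue (f : ℂ → ℂ) (a : ℂ) : Prop :=
  ∃ Γ : ℝ → ℂ, ContinuousOn Γ (Set.Ioo 0 1) ∧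
    Tendsto (fun t => ‖Γ t‖) (𝓝[<] (1:ℝ)) atTop ∧
    Tendsto (fun t => f (Γ t)) (𝓝[<] (1:ℝ)) (𝓝 a)

/-- `f` belongs to the Eremenko–Lyubich class `B`. -/
def EremenkoLyubich (f : ℂ → ℂ) : Prop :=
  TranscEntire f ∧ IsBounded {a : ℂ | IsCriticalValue f a ∨ IsAsymptoticValue f a}

/-- `η_f = lim_{R→∞} inf_{|f(z)|>R} |z f'(z)/f(z)|`, computed as a monotone limit
(supremum over `R` of the infimum over `D_R = {z : |f(z)| > R}`), valued in `[0,∞]`. -/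
noncomputable def eta (f : ℂ → ℂ) : ℝ≥0∞ :=
  ⨆ R : ℝ, ⨅ z ∈ {z : ℂ | R < ‖f z‖}, (‖z * deriv f z / f z‖₊ : ℝ≥0∞)

/-- Local inverse package for an injective holomorphic map at a point of
non-vanishing derivative. -/
lemma aux_localInverse (φ : ℂ → ℂ) (W : Set ℂ) (hWo : IsOpen W)
    (hφd : DifferentiableOn ℂ φ W)
    (z : ℂ) (hz : z ∈ W) (hne : deriv φ z ≠ 0) :
    ∃ g : ℂ → ℂ, HasStrictDerivAt g (deriv φ z)⁻¹ (φ z) ∧ ContinuousAt g (φ z) ∧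
      g (φ z) = z ∧ ∀ᶠ y in 𝓝 (φ z), φ (g y) = y := by
  have hAn : AnalyticAt ℂ φ z := hφd.analyticAt (hWo.mem_nhds hz)
  have hsd : HasStrictDerivAt φ (deriv φ z) z := by
    have := hAn.hasStrictFDerivAt.hasStrictDerivAt
    rwa [fderiv_apply_one_eq_deriv] at this
  have hE := hsd.hasStrictFDerivAt_equiv hne
  exact ⟨HasStrictDerivAt.localInverse φ (deriv φ z) z hsd hne, hsd.to_localInverse hne,
    hE.localInverse_continuousAt, hE.localInverse_apply_image, hE.eventually_right_inverse⟩

/-- The global inverse `u = invFunOn φ W` has the expected derivative along points of the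
image where `deriv φ ≠ 0`. -/
lemma aux_invDeriv (φ : ℂ → ℂ) (W : Set ℂ) (hWo : IsOpen W)
    (hφd : DifferentiableOn ℂ φ W) (hφi : Set.InjOn φ W)
    (x : ℝ) (hW : Function.invFunOn φ W ↑x ∈ W)
    (hφx : φ (Function.invFunOn φ W ↑x) = ↑x)
    (hne : deriv φ (Function.invFunOn φ W ↑x) ≠ 0) :
    HasDerivAt (fun s : ℝ => Function.invFunOn φ W ↑s)
      ((deriv φ (Function.invFunOn φ W ↑x))⁻¹) x := by
  set u := Function.invFunOn φ W with hu
  set z := u ↑x with hzdef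
  obtain ⟨g, hg1, hg3, hg4, hg2⟩ := aux_localInverse φ W hWo hφd z hW hne
  rw [hφx] at hg1 hg2 hg3 hg4
  have hWev : ∀ᶠ y in 𝓝 (↑x : ℂ), g y ∈ W := by
    have : W ∈ 𝓝 (g ↑x) := hWo.mem_nhds (hg4 ▸ hW)
    exact hg3.eventually_mem this
  have heq : u =ᶠ[𝓝 (↑x : ℂ)] g := by
    filter_upwards [hg2, hWev] with y h1 h2
    have hyim : ∃ a ∈ W, φ a = y := ⟨g y, h2, h1⟩
    exact hφi (Function.invFunOn_mem hyim) h2 (by rw [Function.invFunOn_eq hyim, h1])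
  have : HasStrictDerivAt u (deriv φ z)⁻¹ (↑x : ℂ) := hg1.congr_of_eventuallyEq heq.symm
  exact this.hasDerivAt.comp_ofReal

set_option maxHeartbeats 2000000 in
/-- Lemma 1: if for every `R > 0` there are `r > 0`, `a₀` with `|a₀| > R`, an asymptotic
curve `Γ'` with asymptotic value `a₀`, a simply connected domain `W ⊇ Γ'`, and a map `φ`
univalent on `W` with `φ(Γ') = (−∞, x₀)` and `f = r e^φ + a₀` on `W`, then `η_f = 0`. -/
theorem stmt_8 (f : ℂ → ℂ) (hf : TranscEntire f)
    (h : ∀ R > 0, ∃ r > (0:ℝ), ∃ a₀ : ℂ, R < ‖a₀‖ ∧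
      ∃ Γ : ℝ → ℂ, ContinuousOn Γ (Set.Ioo 0 1) ∧
        Tendsto (fun t => ‖Γ t‖) (𝓝[<] (1:ℝ)) atTop ∧
        Tendsto (fun t => f (Γ t)) (𝓝[<] (1:ℝ)) (𝓝 a₀) ∧
      ∃ W : Set ℂ, IsOpen W ∧ IsConnected W ∧ SimplyConnectedSpace W ∧
        Γ '' Set.Ioo 0 1 ⊆ W ∧
      ∃ φ : ℂ → ℂ, DifferentiableOn ℂ φ W ∧ Set.InjOn φ W ∧
        ∃ x₀ : ℝ, φ '' (Γ '' Set.Ioo 0 1) = (fun x : ℝ => (x : ℂ)) '' Set.Iio x₀ ∧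
        ∀ z ∈ W, f z = r * Complex.exp (φ z) + a₀) :
    eta f = 0 := by
  rw [_root_.eta]
  refine le_antisymm (iSup_le fun R => ?_) zero_le
  by_contra hcpos
  rw [not_le] at hcpos
  set c := ⨅ z ∈ {z : ℂ | R < ‖f z‖}, (‖z * deriv f z / f z‖₊ : ℝ≥0∞) with hcdef
  set R' := max R 1 with hR'def
  have hR'1 : (1:ℝ) ≤ R' := le_max_right R 1
  have hR'0 : (0:ℝ) < R' := lt_of_lt_of_le one_pos hR'1
  have hRR' : R ≤ R' := le_max_left R 1
  obtain ⟨r, hr, a₀, hAa, Γ, hΓc, hGinf, hΓa, W, hWo, hWconn, hWsc, hΓW, φ, hφd, hφi, x₀,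
    himg, hfW⟩ := h R' hR'0
  set u := Function.invFunOn φ W with hu
  -- basic facts about u on the ray
  have hkey1 : ∀ x : ℝ, x < x₀ → u ↑x ∈ W ∧ φ (u ↑x) = ↑x := by
    intro x hx
    have hmem : (↑x : ℂ) ∈ φ '' W := by
      have h1 : (↑x : ℂ) ∈ (fun x : ℝ => (x : ℂ)) '' Set.Iio x₀ := ⟨x, hx, rfl⟩
      rw [← himg] at h1
      exact image_mono (f := φ) hΓW h1
    obtain ⟨z, hz, hzx⟩ := hmem
    exact ⟨Function.invFunOn_mem ⟨z, hz, hzx⟩, Function.invFunOn_eq ⟨z, hz, hzx⟩⟩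
  have hufval : ∀ x : ℝ, x < x₀ → f (u ↑x) = (↑(r * Real.exp x) : ℂ) + a₀ := by
    intro x hx
    rw [hfW _ (hkey1 x hx).1, (hkey1 x hx).2]
    push_cast [← Complex.ofReal_exp]
    ring
  -- choice of δ and X₀
  set δ := (‖a₀‖ - R') / 2 with hδdef
  have hδ : 0 < δ := by simp only [hδdef]; linarith
  set X₀ := min (x₀ - 1) (Real.log (δ / r)) with hX₀def
  have hX₀x₀ : X₀ < x₀ := lt_of_le_of_lt (min_le_left _ _) (by linarith)
  have hX₀δ : ∀ x : ℝ, x ≤ X₀ → r * Real.exp x ≤ δ := by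
    intro x hx
    have h1 : Real.exp x ≤ δ / r := by
      calc Real.exp x ≤ Real.exp (Real.log (δ / r)) :=
            Real.exp_le_exp.mpr (le_trans hx (min_le_right _ _))
        _ = δ / r := Real.exp_log (div_pos hδ hr)
    calc r * Real.exp x ≤ r * (δ / r) := by nlinarith
      _ = δ := by field_simp
  have hfub : ∀ x : ℝ, x ≤ X₀ → R' + δ ≤ ‖f (u ↑x)‖ := by
    intro x hx
    have hx0 : x < x₀ := lt_of_le_of_lt hx hX₀x₀
    have h1 : ‖a₀‖ ≤ ‖f (u ↑x)‖ + (r * Real.exp x) := by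
      have h2 : a₀ = f (u ↑x) - (↑(r * Real.exp x) : ℂ) := by rw [hufval x hx0]; ring
      calc ‖a₀‖ = ‖f (u ↑x) - (↑(r * Real.exp x) : ℂ)‖ := by
            rw [← h2]
        _ ≤ ‖f (u ↑x)‖ + ‖(↑(r * Real.exp x) : ℂ)‖ := norm_sub_le _ _
        _ = ‖f (u ↑x)‖ + (r * Real.exp x) := by
            rw [Complex.norm_real, Real.norm_eq_abs,
              abs_of_pos (by positivity)]
    have h3 := hX₀δ x hx
    have h4 : ‖a₀‖ = R' + 2 * δ := by simp only [hδdef]; ring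
    linarith
  have hmemS : ∀ x : ℝ, x ≤ X₀ → R < ‖f (u ↑x)‖ := by
    intro x hx
    have := hfub x hx
    linarith
  -- c is finite and positive
  have hcle : ∀ z : ℂ, R < ‖f z‖ → c ≤ (‖z * deriv f z / f z‖₊ : ℝ≥0∞) := by
    intro z hz
    exact iInf₂_le z hz
  have hcfin : c ≠ ⊤ :=
    ne_top_of_le_ne_top ENNReal.coe_ne_top (hcle _ (hmemS X₀ le_rfl))
  set c' := c.toReal with hc'def
  have hc'pos : 0 < c' := ENNReal.toReal_pos hcpos.ne' hcfin
  have hcr : ∀ z : ℂ, R < ‖f z‖ → c' ≤ ‖z * deriv f z / f z‖ := by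
    intro z hz
    have := ENNReal.toReal_mono ENNReal.coe_ne_top (hcle z hz)
    simpa using this
  -- derivative formula for f on W
  have hderivf : ∀ z ∈ W, deriv f z = ↑r * Complex.exp (φ z) * deriv φ z := by
    intro z hz
    have hφz : HasDerivAt φ (deriv φ z) z :=
      (hφd.differentiableAt (hWo.mem_nhds hz)).hasDerivAt
    have h1 : HasDerivAt (fun w => (↑r : ℂ) * Complex.exp (φ w) + a₀)
        (↑r * Complex.exp (φ z) * deriv φ z) z := by
      have h2 := (hφz.cexp.const_mul (↑r : ℂ)).add_const a₀
      rw [mul_assoc]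
      exact h2
    have heq : f =ᶠ[𝓝 z] fun w => (↑r : ℂ) * Complex.exp (φ w) + a₀ :=
      eventually_of_mem (hWo.mem_nhds hz) hfW
    rw [heq.deriv_eq]
    exact h1.deriv
  -- constants
  set K := r / (c' * R') with hKdef
  have hKpos : 0 < K := div_pos hr (mul_pos hc'pos hR'0)
  set X₁ := min X₀ (Real.log (1 / (2 * K))) with hX₁def
  have hX₁X₀ : X₁ ≤ X₀ := min_le_left _ _
  have hX₁x₀ : X₁ < x₀ := lt_of_le_of_lt hX₁X₀ hX₀x₀
  have hKX₁ : K * Real.exp X₁ ≤ 1 / 2 := by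
    have h1 : Real.exp X₁ ≤ 1 / (2 * K) := by
      calc Real.exp X₁ ≤ Real.exp (Real.log (1 / (2 * K))) :=
            Real.exp_le_exp.mpr (min_le_right _ _)
        _ = 1 / (2 * K) := Real.exp_log (by positivity)
    calc K * Real.exp X₁ ≤ K * (1 / (2 * K)) := by nlinarith
      _ = 1 / 2 := by field_simp
  -- key pointwise estimate
  have hkey : ∀ x : ℝ, x ≤ X₁ → deriv φ (u ↑x) ≠ 0 ∧
      ‖(deriv φ (u ↑x))⁻¹‖ ≤ K * Real.exp x * ‖u ↑x‖ := by
    intro x hx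
    have hxX₀ : x ≤ X₀ := le_trans hx hX₁X₀
    have hxx₀ : x < x₀ := lt_of_le_of_lt hxX₀ hX₀x₀
    set z := u ↑x with hzdef
    have hzW : z ∈ W := (hkey1 x hxx₀).1
    have hφz : φ z = ↑x := (hkey1 x hxx₀).2
    have hzS : R < ‖f z‖ := hmemS x hxX₀
    have hcz : c' ≤ ‖z * deriv f z / f z‖ := hcr z hzS
    have hFpos : (0:ℝ) < ‖f z‖ := by
      linarith [hfub x hxX₀]
    have hFR' : R' ≤ ‖f z‖ := by
      linarith [hfub x hxX₀]
    set A := ‖deriv φ z‖ with hAdef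
    have e2 : ‖deriv f z‖ = r * Real.exp x * A := by
      rw [hderivf z hzW, hφz, ← Complex.ofReal_exp]
      simp only [norm_mul, Complex.norm_real, Real.norm_eq_abs,
        abs_of_pos hr, abs_of_pos (Real.exp_pos x), hAdef]
    have e1 : ‖z * deriv f z / f z‖ = ‖z‖ * (r * Real.exp x * A) / ‖f z‖ := by
      rw [norm_div, norm_mul, e2]
    rw [e1] at hcz
    have hApos : 0 < A := by
      by_contra hA0
      push_neg at hA0
      have : A = 0 := le_antisymm hA0 (norm_nonneg _)
      rw [this] at hcz
      simp at hcz
      nlinarith [hcz, norm_nonneg z, Real.exp_pos x]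
    have hAne : deriv φ z ≠ 0 := by
      intro h0
      rw [hAdef, h0, norm_zero] at hApos
      exact lt_irrefl _ hApos
    refine ⟨hAne, ?_⟩
    have h3 : c' * ‖f z‖ ≤ ‖z‖ * (r * Real.exp x * A) := by
      rwa [le_div_iff₀ hFpos] at hcz
    have h4 : c' * R' ≤ ‖z‖ * (r * Real.exp x * A) := by
      nlinarith
    rw [norm_inv, ← hAdef, inv_eq_one_div, div_le_iff₀ hApos]
    have hcR' : (0:ℝ) < c' * R' := mul_pos hc'pos hR'0
    rw [← mul_le_mul_iff_of_pos_right hcR', one_mul]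
    calc c' * R' ≤ ‖z‖ * (r * Real.exp x * A) := h4
      _ = K * Real.exp x * ‖z‖ * A * (c' * R') := by
          rw [hKdef]
          field_simp
  -- derivative of the inverse path
  have hderivp : ∀ x : ℝ, x ≤ X₁ →
      HasDerivAt (fun s : ℝ => u ↑s) ((deriv φ (u ↑x))⁻¹) x := by
    intro x hx
    have hxx₀ : x < x₀ := lt_of_le_of_lt hx hX₁x₀
    exact aux_invDeriv φ W hWo hφd hφi x (hkey1 x hxx₀).1 (hkey1 x hxx₀).2 (hkey x hx).1
  set p := fun s : ℝ => u ↑s with hpdef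
  set B := ‖p X₁‖ with hBdef
  -- choose a point on the curve far away
  have ev1 : ∀ᶠ t in 𝓝[<] (1:ℝ), t ∈ Set.Ioo (0:ℝ) 1 :=
    Ioo_mem_nhdsLT_of_mem (by constructor <;> norm_num)
  have ev2 : ∀ᶠ t in 𝓝[<] (1:ℝ), 2 * B + 1 < ‖Γ t‖ :=
    hGinf.eventually_gt_atTop _
  have ev3 : ∀ᶠ t in 𝓝[<] (1:ℝ), dist (f (Γ t)) a₀ < r * Real.exp X₁ :=
    Metric.tendsto_nhds.mp hΓa _ (by positivity)
  obtain ⟨t, ht01, htB, htd⟩ := (ev1.and (ev2.and ev3)).exists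
  have hΓtW : Γ t ∈ W := hΓW ⟨t, ht01, rfl⟩
  have hφΓt : ∃ xt : ℝ, xt < x₀ ∧ (↑xt : ℂ) = φ (Γ t) := by
    have h1 : φ (Γ t) ∈ (fun x : ℝ => (x : ℂ)) '' Set.Iio x₀ := by
      rw [← himg]; exact ⟨Γ t, ⟨t, ht01, rfl⟩, rfl⟩
    obtain ⟨xt, hxt, hxteq⟩ := h1
    exact ⟨xt, hxt, hxteq⟩
  obtain ⟨xt, hxtx₀, hxteq⟩ := hφΓt
  have hΓteq : u ↑xt = Γ t := by
    apply hφi (hkey1 xt hxtx₀).1 hΓtW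
    rw [(hkey1 xt hxtx₀).2, hxteq]
  have hfΓt : f (Γ t) - a₀ = (↑(r * Real.exp xt) : ℂ) := by
    rw [← hΓteq, hufval xt hxtx₀]; ring
  have hxtX₁ : xt < X₁ := by
    have h1 : dist (f (Γ t)) a₀ = r * Real.exp xt := by
      rw [dist_eq_norm, hfΓt, Complex.norm_real, Real.norm_eq_abs,
        abs_of_pos (by positivity)]
    rw [h1] at htd
    have h2 : Real.exp xt < Real.exp X₁ := by nlinarith
    exact Real.exp_lt_exp.mp h2
  have hxtX₁' : xt ≤ X₁ := le_of_lt hxtX₁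
  -- interval estimates
  have hpc : ContinuousOn p (Set.Icc xt X₁) := fun s hs =>
    ((hderivp s hs.2).continuousAt).continuousWithinAt
  obtain ⟨y, hyI, hymax⟩ := isCompact_Icc.exists_isMaxOn (nonempty_Icc.mpr hxtX₁')
    (hpc.norm)
  set M := ‖p y‖ with hMdef
  have hyX₁ : y ≤ X₁ := hyI.2
  set q := fun s : ℝ => (deriv φ (u ↑s))⁻¹ with hqdef
  have hqc : ContinuousOn q (Set.Icc xt X₁) := by
    intro s hs
    apply ContinuousAt.continuousWithinAt
    have h1 : ContinuousAt p s := (hderivp s hs.2).continuousAt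
    have hsx₀ : s < x₀ := lt_of_le_of_lt hs.2 hX₁x₀
    have h2 : ContinuousAt (deriv φ) (p s) := by
      have hAn : AnalyticOnNhd ℂ φ W := hφd.analyticOnNhd hWo
      exact ((hAn.deriv) (p s) (hkey1 s hsx₀).1).continuousAt
    exact (h2.comp h1).inv₀ (hkey s hs.2).1
  have hqint : IntervalIntegrable q MeasureTheory.volume y X₁ := by
    apply ContinuousOn.intervalIntegrable
    rw [uIcc_of_le hyX₁]
    exact hqc.mono (Icc_subset_Icc hyI.1 le_rfl)
  have hftc : ∫ s in y..X₁, q s = p X₁ - p y := by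
    apply intervalIntegral.integral_eq_sub_of_hasDerivAt
    · intro s hs
      rw [uIcc_of_le hyX₁] at hs
      exact hderivp s hs.2
    · exact hqint
  have hMnonneg : 0 ≤ M := norm_nonneg _
  have hint1 : ‖p X₁ - p y‖ ≤ K * M * (Real.exp X₁ - Real.exp y) := by
    rw [← hftc]
    calc ‖∫ s in y..X₁, q s‖ ≤ ∫ s in y..X₁, ‖q s‖ :=
          intervalIntegral.norm_integral_le_integral_norm hyX₁
      _ ≤ ∫ s in y..X₁, K * M * Real.exp s := by
          apply intervalIntegral.integral_mono_on hyX₁ hqint.norm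
          · exact ((continuous_const.mul Real.continuous_exp).intervalIntegrable _ _)
          · intro s hs
            have hsI : s ∈ Set.Icc xt X₁ := ⟨le_trans hyI.1 hs.1, hs.2⟩
            have h5 := (hkey s hs.2).2
            have h6 : ‖p s‖ ≤ M := hymax hsI
            calc ‖q s‖ ≤ K * Real.exp s * ‖p s‖ := h5
              _ ≤ K * Real.exp s * M := by
                  exact mul_le_mul_of_nonneg_left h6 (by positivity)
              _ = K * M * Real.exp s := by ring
      _ = K * M * (Real.exp X₁ - Real.exp y) := by
          rw [intervalIntegral.integral_const_mul, integral_exp]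
  have hint2 : ‖p y‖ - ‖p X₁‖ ≤ M / 2 := by
    have h1 : ‖p y‖ - ‖p X₁‖ ≤ ‖p X₁ - p y‖ := by
      have := norm_sub_norm_le (p y) (p X₁)
      rw [norm_sub_rev] at this
      linarith
    have h2 : K * M * (Real.exp X₁ - Real.exp y) ≤ M / 2 := by
      have h3 : M * (K * Real.exp X₁) ≤ M * (1/2) := mul_le_mul_of_nonneg_left hKX₁ hMnonneg
      have h4 : (0:ℝ) ≤ K * M * Real.exp y := by positivity
      nlinarith [h3, h4]
    linarith [hint1]
  have hM2B : M ≤ 2 * B := by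
    simp only [hMdef, hBdef] at hint2 ⊢
    linarith [norm_nonneg (p X₁)]
  have hfinal : ‖Γ t‖ ≤ M := by
    have h0 : ‖u ↑xt‖ ≤ M := hymax ⟨le_rfl, hxtX₁'⟩
    calc ‖Γ t‖ = ‖u ↑xt‖ := by rw [hΓteq]
      _ ≤ M := h0
  linarith
end

section
/- Let f be a transcendental entire function with η_f ≠ 0, where η_f = lim_{R→∞} inf_{|f(z)|>R} |z f'(z)/f(z)|. Then the set of finite asymptotic values of f arising from direct logarithmic singularities of f⁻¹ is bounded; that is, there exists R > 0 such that f has no direct logarithmic singularity over any a₀ ∈ ℂ with |a₀| > R. -/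
open Complex Set Metric Filter Topology Bornology
open scoped ENNReal

/-- The ball `B(a,r)` on the Riemann sphere, intersected with `ℂ`:
`B(a,r)` for finite `a`, and `{z : |z| > r}` for `a = ∞`. -/
def sphBall (a : OnePoint ℂ) (r : ℝ) : Set ℂ :=
  Option.rec {z : ℂ | r < ‖z‖} (fun w => Metric.ball w r) a

/-- The punctured ball `B(a,r) \ {a}` on the Riemann sphere, intersected with `ℂ`. -/
def punctBall (a : OnePoint ℂ) (r : ℝ) : Set ℂ :=
  Option.rec {z : ℂ | r < ‖z‖} (fun w => Metric.ball w r \ {w}) a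

/-- A transcendental singularity of `f⁻¹` over `a`: a nested choice `r ↦ U(r)` of
connected components of `f⁻¹(B(a,r))` with empty intersection. -/
structure TranscSing (f : ℂ → ℂ) (a : OnePoint ℂ) where
  U : ℝ → Set ℂ
  isComp : ∀ r, 0 < r →
    ∃ z ∈ f ⁻¹' sphBall a r, U r = connectedComponentIn (f ⁻¹' sphBall a r) z
  nested : ∀ r₁ r₂, 0 < r₁ → r₁ ≤ r₂ → U r₁ ⊆ U r₂
  inter_empty : ⋂ r ∈ Set.Ioi (0:ℝ), U r = ∅

/-- The singularity is direct: for some `r > 0`, `f` omits the value `a` on `U(r)`. -/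
def TranscSing.IsDirect {f : ℂ → ℂ} {a : OnePoint ℂ} (s : TranscSing f a) : Prop :=
  ∃ r > 0, ∀ z ∈ s.U r, (f z : OnePoint ℂ) ≠ a

/-- The singularity is indirect if it is not direct. -/
def TranscSing.IsIndirect {f : ℂ → ℂ} {a : OnePoint ℂ} (s : TranscSing f a) : Prop :=
  ¬ s.IsDirect

/-- The singularity is logarithmic: for some `r > 0` the restriction
`f : U(r) → B(a,r) \ {a}` is a universal covering. -/
def TranscSing.IsLogarithmic {f : ℂ → ℂ} {a : OnePoint ℂ} (s : TranscSing f a) : Prop :=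
  ∃ r > 0, ∃ hm : Set.MapsTo f (s.U r) (punctBall a r),
    SimplyConnectedSpace (s.U r) ∧ IsCoveringMap hm.restrict

/-- `a` is a limit of critical values of `f` (on the Riemann sphere). -/
def IsLimitOfCritVals (f : ℂ → ℂ) (a : OnePoint ℂ) : Prop :=
  ∃ c : ℕ → ℂ, (∀ n, IsCriticalValue f (c n)) ∧
    Tendsto (fun n => (c n : OnePoint ℂ)) atTop (𝓝 a)

set_option maxHeartbeats 1000000 in
/-- If `η_f ≠ 0` then the projections of direct logarithmic singularities over finite
points are bounded. -/
theorem stmt_9 (f : ℂ → ℂ) (hf : TranscEntire f) (h : eta f ≠ 0) :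
    ∃ R > 0, ∀ a₀ : ℂ, R < ‖a₀‖ →
      ∀ s : TranscSing f (a₀ : OnePoint ℂ), ¬ s.IsLogarithmic := by
  classical
  -- Step 1: extract a quantitative bound from `eta f ≠ 0`.
  obtain ⟨R₁, hR₁⟩ : ∃ R : ℝ,
      (⨅ z ∈ {z : ℂ | R < ‖f z‖}, (‖z * deriv f z / f z‖₊ : ℝ≥0∞)) ≠ 0 := by
    by_contra hcon
    push_neg at hcon
    apply h
    rw [_root_.eta, ENNReal.iSup_eq_zero]
    exact hcon
  set R₀ : ℝ := max R₁ 1 with hR₀def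
  have hR₀1 : (1:ℝ) ≤ R₀ := le_max_right _ _
  have hR₀pos : (0:ℝ) < R₀ := lt_of_lt_of_le zero_lt_one hR₀1
  set εE : ℝ≥0∞ := min (⨅ z ∈ {z : ℂ | R₁ < ‖f z‖},
      (‖z * deriv f z / f z‖₊ : ℝ≥0∞)) 1 with hεEdef
  have hεE0 : εE ≠ 0 := (lt_min (pos_iff_ne_zero.2 hR₁) zero_lt_one).ne'
  have hεEtop : εE ≠ ⊤ := ne_top_of_le_ne_top ENNReal.one_ne_top (min_le_right _ _)
  set ε : ℝ := εE.toReal with hεdef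
  have hεpos : 0 < ε := ENNReal.toReal_pos hεE0 hεEtop
  have hεR₀ : 0 < ε * R₀ := by positivity
  have hkey : ∀ z : ℂ, R₀ < ‖f z‖ →
      ε * ‖f z‖ ≤ ‖z‖ * ‖deriv f z‖ := by
    intro z hz
    have hmem : z ∈ {z : ℂ | R₁ < ‖f z‖} :=
      lt_of_le_of_lt (le_max_left R₁ 1) hz
    have h2 : εE ≤ (‖z * deriv f z / f z‖₊ : ℝ≥0∞) :=
      le_trans (min_le_left _ _) (iInf₂_le z hmem)
    have h3 : ε ≤ ‖z * deriv f z / f z‖ := by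
      have := ENNReal.toReal_mono ENNReal.coe_ne_top h2
      simpa using this
    have hfz : (0:ℝ) < ‖f z‖ := lt_trans hR₀pos hz
    rw [norm_div, norm_mul] at h3
    exact (le_div_iff₀ hfz).1 h3
  -- Step 2: the claimed bound is `R₀ + 1`.
  refine ⟨R₀ + 1, by linarith, ?_⟩
  intro a₀ ha s hslog
  obtain ⟨r, hrpos, hmapsTo, _, _⟩ := hslog
  have hm' : ∀ z ∈ s.U r, f z ∈ Metric.ball a₀ r ∧ f z ≠ a₀ := by
    intro z hz
    have h1 : f z ∈ Metric.ball a₀ r \ {a₀} := hmapsTo hz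
    exact ⟨h1.1, by simpa using h1.2⟩
  set Ω : Set ℂ := f ⁻¹' Metric.ball a₀ r with hΩdef
  have hΩopen : IsOpen Ω := Metric.isOpen_ball.preimage hf.1.continuous
  obtain ⟨z₀, hz₀Ω, hUreq⟩ := s.isComp r hrpos
  have hUeq : s.U r = connectedComponentIn Ω z₀ := hUreq
  have hUopen : IsOpen (s.U r) := by rw [hUeq]; exact hΩopen.connectedComponentIn
  have hCL : ∀ x y : ℂ, x ∈ s.U r → y ∈ Ω → x ∈ connectedComponentIn Ω y → y ∈ s.U r := by
    intro x y hx hyΩ hxy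
    have h1 := connectedComponentIn_eq hxy
    rw [hUeq] at hx ⊢
    rw [connectedComponentIn_eq hx, ← h1]
    exact mem_connectedComponentIn hyΩ
  -- small radius
  set r' : ℝ := min r (min ((‖a₀‖ - R₀)/2) (ε * R₀ / 12)) with hr'def
  have hr'pos : 0 < r' := lt_min hrpos (lt_min (by linarith) (by positivity))
  obtain ⟨z', hz'mem, hU'eq⟩ := s.isComp r' hr'pos
  have hz'U' : z' ∈ s.U r' := by rw [hU'eq]; exact mem_connectedComponentIn hz'mem
  have hz'U : z' ∈ s.U r := s.nested r' r hr'pos (min_le_left _ _) hz'U'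
  have hfz'ball : f z' ∈ Metric.ball a₀ r' := hz'mem
  have hfz'ne : f z' ≠ a₀ := (hm' z' hz'U).2
  set d₀ : ℝ := ‖f z' - a₀‖ with hd₀def
  have hd₀pos : 0 < d₀ := norm_pos_iff.2 (sub_ne_zero.2 hfz'ne)
  have hd₀lt : d₀ < r' := by
    have h1 := hfz'ball
    rwa [Metric.mem_ball, Complex.dist_eq] at h1
  have hr'le1 : r' ≤ r := min_le_left _ _
  have hr'le2 : r' ≤ (‖a₀‖ - R₀)/2 := le_trans (min_le_right _ _) (min_le_left _ _)
  have hr'le3 : r' ≤ ε * R₀ / 12 := le_trans (min_le_right _ _) (min_le_right _ _)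
  -- the radial path
  set w : ℝ → ℂ := fun t => f z' + (t : ℂ) * (a₀ - f z') with hwdef
  have hw0 : w 0 = f z' := by simp [hwdef]
  have hw1 : w 1 = a₀ := by simp [hwdef]
  have hwcont : Continuous w := by
    apply Continuous.add continuous_const
    exact (Complex.continuous_ofReal).mul continuous_const
  have hwa : ∀ t : ℝ, w t - a₀ = (1 - (t:ℂ)) * (f z' - a₀) := by
    intro t; simp only [hwdef]; ring
  have hwdist : ∀ t ∈ Icc (0:ℝ) 1, ‖w t - a₀‖ ≤ d₀ := by
    intro t ht
    rw [hwa t, norm_mul]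
    have h1 : ‖1 - (t:ℂ)‖ = 1 - t := by
      rw [show (1 : ℂ) - (t:ℂ) = ((1 - t : ℝ) : ℂ) by push_cast; ring, Complex.norm_real, Real.norm_eq_abs,
        _root_.abs_of_nonneg (by linarith [ht.2])]
    rw [h1, ← hd₀def]
    nlinarith [ht.1, ht.2, hd₀pos]
  have hwR : ∀ t ∈ Icc (0:ℝ) 1, R₀ < ‖w t‖ := by
    intro t ht
    have h1 := hwdist t ht
    have h2 : ‖a₀‖ ≤ ‖w t‖ + d₀ := by
      calc ‖a₀‖ = ‖w t + (a₀ - w t)‖ := by ring_nf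
        _ ≤ ‖w t‖ + ‖a₀ - w t‖ := norm_add_le _ _
        _ ≤ ‖w t‖ + d₀ := by
            rw [norm_sub_rev]; linarith
    linarith
  have hwball : ∀ t ∈ Icc (0:ℝ) 1, w t ∈ Metric.ball a₀ r := by
    intro t ht
    rw [Metric.mem_ball, Complex.dist_eq]
    exact lt_of_le_of_lt (hwdist t ht) (lt_of_lt_of_le hd₀lt hr'le1)
  set Z : ℝ := ‖z'‖ with hZdef
  have hZ0 : 0 ≤ Z := norm_nonneg _
  -- limit lemma
  have hLL : ∀ (t : ℕ → ℝ) (z : ℕ → ℂ) (L : ℝ), (∀ n, t n ∈ Icc (0:ℝ) 1) →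
      (∀ n, z n ∈ s.U r) → (∀ n, f (z n) = w (t n)) →
      (∀ n, ‖z n‖ ≤ Z * (1 + t n / 4)) →
      Tendsto t atTop (𝓝 L) → L ∈ Icc (0:ℝ) 1 →
      ∃ zs : ℂ, zs ∈ s.U r ∧ f zs = w L ∧ ‖zs‖ ≤ Z * (1 + L/4) := by
    intro t z L htI hzU hfz hbd htL hLI
    have hbd2 : ∀ n, z n ∈ Metric.closedBall (0:ℂ) (Z * 2) := by
      intro n
      rw [Metric.mem_closedBall, Complex.dist_eq, sub_zero]
      nlinarith [(htI n).1, (htI n).2, hbd n, hZ0]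
    obtain ⟨zs, _, φ, hφ, hconv⟩ := tendsto_subseq_of_bounded
      Metric.isBounded_closedBall hbd2
    have htLφ : Tendsto (fun n => t (φ n)) atTop (𝓝 L) := htL.comp hφ.tendsto_atTop
    have hfzs : f zs = w L := by
      have h1 : Tendsto (fun n => f (z (φ n))) atTop (𝓝 (f zs)) :=
        (hf.1.continuous.tendsto zs).comp hconv
      have h2 : Tendsto (fun n => f (z (φ n))) atTop (𝓝 (w L)) := by
        have h3 := (hwcont.tendsto L).comp htLφ
        simpa [Function.comp_def, hfz] using h3
      exact tendsto_nhds_unique h1 h2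
    have habs : ‖zs‖ ≤ Z * (1 + L/4) := by
      have h1 : Tendsto (fun n => ‖z (φ n)‖) atTop (𝓝 (‖zs‖)) :=
        (continuous_norm.tendsto zs).comp hconv
      have h2 : Tendsto (fun n => Z * (1 + t (φ n)/4)) atTop (𝓝 (Z * (1 + L/4))) := by
        have h3 : Continuous fun x : ℝ => Z * (1 + x/4) := continuous_const.mul (continuous_const.add (continuous_id.div_const 4))
        exact (h3.tendsto L).comp htLφ
      exact le_of_tendsto_of_tendsto' h1 h2 fun n => hbd (φ n)
    have hzsΩ : zs ∈ Ω := by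
      have : f zs ∈ Metric.ball a₀ r := by rw [hfzs]; exact hwball L hLI
      exact this
    have hVopen : IsOpen (connectedComponentIn Ω zs) := hΩopen.connectedComponentIn
    have hVmem : zs ∈ connectedComponentIn Ω zs := mem_connectedComponentIn hzsΩ
    have hev : ∀ᶠ n in atTop, z (φ n) ∈ connectedComponentIn Ω zs :=
      hconv (hVopen.mem_nhds hVmem)
    obtain ⟨n, hn⟩ := hev.exists
    exact ⟨zs, hCL (z (φ n)) zs (hzU (φ n)) hzsΩ hn, hfzs, habs⟩
  -- continuation: the key claim
  have hP : ∀ τ : ℝ, 0 ≤ τ → τ < 1 →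
      ∃ z : ℂ, z ∈ s.U r ∧ f z = w τ ∧ ‖z‖ ≤ Z * (1 + τ/4) := by
    intro τ hτ0 hτ1
    set A : Set ℝ := {t | t ∈ Icc 0 τ ∧ ∀ s_ ∈ Icc (0:ℝ) t,
      ∃ z : ℂ, z ∈ s.U r ∧ f z = w s_ ∧ ‖z‖ ≤ Z * (1 + s_/4)} with hAdef
    have hP0 : ∃ z : ℂ, z ∈ s.U r ∧ f z = w 0 ∧ ‖z‖ ≤ Z * (1 + 0/4) :=
      ⟨z', hz'U, hw0.symm, by rw [hZdef]; nlinarith [hZ0]⟩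
    have h0A : (0:ℝ) ∈ A := by
      refine ⟨⟨le_refl 0, hτ0⟩, ?_⟩
      intro s_ hs_
      have hseq : s_ = 0 := le_antisymm hs_.2 hs_.1
      rw [hseq]; exact hP0
    have hAne : A.Nonempty := ⟨0, h0A⟩
    have hbdd : BddAbove A := ⟨τ, fun t ht => ht.1.2⟩
    set m : ℝ := sSup A with hmdef
    have hm0 : 0 ≤ m := le_csSup hbdd h0A
    have hmτ : m ≤ τ := csSup_le hAne fun t ht => ht.1.2
    have hm1 : m < 1 := lt_of_le_of_lt hmτ hτ1
    have hclosed : ∀ s_ ∈ Icc (0:ℝ) m,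
        ∃ z : ℂ, z ∈ s.U r ∧ f z = w s_ ∧ ‖z‖ ≤ Z * (1 + s_/4) := by
      intro s_ hs_
      rcases lt_or_eq_of_le hs_.2 with hlt | heq
      · obtain ⟨t, htA, hst⟩ := exists_lt_of_lt_csSup hAne hlt
        exact htA.2 s_ ⟨hs_.1, le_of_lt hst⟩
      · subst heq
        have hch : ∀ n : ℕ, ∃ t, t ∈ A ∧ m - 1/(n+1) < t := by
          intro n
          have hpos : (0:ℝ) < 1/(n+1) := by positivity
          exact exists_lt_of_lt_csSup hAne (by rw [← hmdef]; linarith)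
        choose t htA htlt using hch
        have htle : ∀ n, t n ≤ m := fun n => by rw [hmdef]; exact le_csSup hbdd (htA n)
        have htP : ∀ n, ∃ z : ℂ, z ∈ s.U r ∧ f z = w (t n) ∧
            ‖z‖ ≤ Z * (1 + (t n)/4) :=
          fun n => (htA n).2 (t n) ⟨(htA n).1.1, le_refl _⟩
        choose z hzU hfz hbd using htP
        have htI : ∀ n, t n ∈ Icc (0:ℝ) 1 :=
          fun n => ⟨(htA n).1.1, le_trans (htle n) (le_of_lt hm1)⟩
        have htm : Tendsto t atTop (𝓝 m) := by
          have h1 : Tendsto (fun n : ℕ => m - 1/(n+1)) atTop (𝓝 m) := by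
            have h2 := tendsto_one_div_add_atTop_nhds_zero_nat (𝕜 := ℝ)
            simpa using tendsto_const_nhds.sub h2
          exact tendsto_of_tendsto_of_tendsto_of_le_of_le h1 tendsto_const_nhds
            (fun n => le_of_lt (htlt n)) htle
        exact hLL t z m htI hzU hfz hbd htm ⟨hm0, le_of_lt hm1⟩
    have hnotlt : ¬ m < τ := by
      intro hmlt
      obtain ⟨zm, hzmU, hfzm, hzmB⟩ := hclosed m ⟨hm0, le_refl m⟩
      have hmI : m ∈ Icc (0:ℝ) 1 := ⟨hm0, le_of_lt hm1⟩
      have hwm : R₀ < ‖f zm‖ := by rw [hfzm]; exact hwR m hmI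
      have hfzmpos : 0 < ‖f zm‖ := lt_trans hR₀pos hwm
      have hder := hkey zm hwm
      have hzm0 : 0 < ‖zm‖ := by
        by_contra hcon
        push_neg at hcon
        have h1 : ‖zm‖ = 0 := le_antisymm hcon (norm_nonneg _)
        rw [h1, zero_mul] at hder
        nlinarith
      have hcpos : 0 < ‖deriv f zm‖ := by
        by_contra hcon
        push_neg at hcon
        have h1 : ‖deriv f zm‖ = 0 :=
          le_antisymm hcon (norm_nonneg _)
        rw [h1, mul_zero] at hder
        nlinarith
      have hcne : deriv f zm ≠ 0 := by
        intro h0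
        rw [h0] at hcpos
        simp at hcpos
      -- choose ρ
      have hcont : ContinuousAt (deriv f) zm :=
        ((hf.1.contDiff : ContDiff ℂ 1 f).continuous_deriv le_rfl).continuousAt
      have hEρ : ∀ᶠ x in 𝓝 zm, x ∈ s.U r ∧
          ‖deriv f x - deriv f zm‖ ≤ ‖deriv f zm‖ / 2 := by
        have e1 : ∀ᶠ x in 𝓝 zm, x ∈ s.U r :=
          eventually_of_mem (hUopen.mem_nhds hzmU) fun x hx => hx
        have e2 : ∀ᶠ x in 𝓝 zm,
            ‖deriv f x - deriv f zm‖ ≤ ‖deriv f zm‖/2 := by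
          have hhalf : 0 < ‖deriv f zm‖/2 := by linarith
          filter_upwards [hcont (Metric.closedBall_mem_nhds (deriv f zm) hhalf)] with x hx
          have hx2 : dist (deriv f x) (deriv f zm) ≤ ‖deriv f zm‖/2 := hx
          rwa [Complex.dist_eq] at hx2
        exact e1.and e2
      obtain ⟨ρ, hρpos, hρ⟩ := Metric.eventually_nhds_iff.1 hEρ
      -- local inverse
      have hsd : HasStrictDerivAt f (deriv f zm) zm := by
        have h1 := (hf.1.analyticAt zm).hasStrictFDerivAt.hasStrictDerivAt
        rwa [fderiv_apply_one_eq_deriv] at h1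
      have hF := hsd.hasStrictFDerivAt_equiv hcne
      set σ : ℂ → ℂ := HasStrictFDerivAt.localInverse f _ zm hF with hσdef
      have hE : ∀ᶠ y in 𝓝 (f zm), f (σ y) = y ∧ σ y ∈ Metric.ball zm ρ := by
        have e1 := hF.eventually_right_inverse
        have e2 : ∀ᶠ y in 𝓝 (f zm), σ y ∈ Metric.ball zm ρ := by
          have hca : ContinuousAt σ (f zm) := hF.localInverse_continuousAt
          have himg : σ (f zm) = zm := hF.localInverse_apply_image
          have h3 : Tendsto σ (𝓝 (f zm)) (𝓝 zm) := by
            have h4 : Tendsto σ (𝓝 (f zm)) (𝓝 (σ (f zm))) := hca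
            rwa [himg] at h4
          exact h3 (Metric.ball_mem_nhds zm hρpos)
        exact e1.and e2
      have hwtend : Tendsto w (𝓝 m) (𝓝 (f zm)) := by
        rw [hfzm]; exact hwcont.continuousAt
      obtain ⟨δ, hδpos, hδ⟩ := Metric.eventually_nhds_iff.1 (hwtend.eventually hE)
      set t₁ : ℝ := min (m + δ/2) τ with ht₁def
      have hmt₁ : m < t₁ := lt_min (by linarith) hmlt
      have ht₁A : t₁ ∈ A := by
        refine ⟨⟨le_trans hm0 (le_of_lt hmt₁), min_le_right _ _⟩, ?_⟩
        intro s_ hs_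
        rcases le_or_gt s_ m with hsm | hsm
        · exact hclosed s_ ⟨hs_.1, hsm⟩
        · have hst₁ : s_ ≤ t₁ := hs_.2
          have hsτ : s_ ≤ τ := le_trans hst₁ (min_le_right _ _)
          have hs1 : s_ < 1 := lt_of_le_of_lt hsτ hτ1
          have hsδ : dist s_ m < δ := by
            rw [Real.dist_eq, _root_.abs_of_nonneg (by linarith : (0:ℝ) ≤ s_ - m)]
            have h4 : s_ ≤ m + δ/2 := le_trans hst₁ (min_le_left _ _)
            linarith
          obtain ⟨hfσ, hσball⟩ := hδ hsδ
          set zs : ℂ := σ (w s_) with hzsdef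
          have hzsU : zs ∈ s.U r := (hρ (Metric.mem_ball.1 hσball)).1
          -- MVT estimate
          set c : ℂ := deriv f zm with hcdef
          have hmvt : ‖zs - zm‖ * ‖c‖ ≤ 2 * ((s_ - m) * d₀) := by
            have hconv : Convex ℝ (Metric.ball zm ρ) := convex_ball zm ρ
            have hderiv : ∀ x ∈ Metric.ball zm ρ,
                HasDerivWithinAt (fun y => f y - c * y) (deriv f x - c)
                  (Metric.ball zm ρ) x := by
              intro x hx
              have h1 : HasDerivAt f (deriv f x) x := (hf.1 x).hasDerivAt
              have h2 : HasDerivAt (fun y : ℂ => c * y) c x := by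
                simpa using (hasDerivAt_id x).const_mul c
              exact (h1.sub h2).hasDerivWithinAt
            have hbnd : ∀ x ∈ Metric.ball zm ρ, ‖deriv f x - c‖ ≤ ‖c‖ / 2 := by
              intro x hx
              have h5 := (hρ (Metric.mem_ball.1 hx)).2
              exact h5
            have hmvt0 := hconv.norm_image_sub_le_of_norm_hasDerivWithin_le hderiv hbnd
              (Metric.mem_ball_self hρpos) hσball
            -- hmvt0 : ‖(f zs - c * zs) - (f zm - c * zm)‖ ≤ (abs c / 2) * ‖zs - zm‖
            have hid : (f zs - c * zs) - (f zm - c * zm) =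
                (w s_ - w m) - c * (zs - zm) := by
              rw [show f zs = w s_ from hfσ, hfzm]; ring
            rw [hid] at hmvt0
            have htri := norm_sub_le (w s_ - w m) ((w s_ - w m) - c * (zs - zm))
            rw [sub_sub_cancel] at htri
            have hws : ‖w s_ - w m‖ = (s_ - m) * d₀ := by
              have h6 : w s_ - w m = ((s_ - m : ℝ) : ℂ) * (a₀ - f z') := by
                simp only [hwdef]; push_cast; ring
              rw [h6, norm_mul, Complex.norm_real, Real.norm_eq_abs,
                _root_.abs_of_nonneg (by linarith : (0:ℝ) ≤ s_ - m), hd₀def,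
                norm_sub_rev]
            simp only [norm_mul] at hmvt0 htri hws
            nlinarith [htri, hmvt0, hws, norm_nonneg (zs - zm)]
          -- conclude the bound
          have h5 : ‖zm‖ ≤ Z * (5/4) := by nlinarith [hzmB, hm1.le, hZ0, hm0]
          have h6 : ε * R₀ ≤ ‖zm‖ * ‖c‖ := by
            have h7 : ε * R₀ ≤ ε * ‖f zm‖ := by nlinarith [hwm.le]
            exact le_trans h7 hder
          have h7 : d₀ ≤ ε * R₀ / 12 := le_of_lt (lt_of_lt_of_le hd₀lt hr'le3)
          have habsnn : 0 ≤ ‖zs - zm‖ := norm_nonneg _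
          have hsm' : (0:ℝ) ≤ s_ - m := by linarith
          have ha1 : ε * R₀ * ‖zs - zm‖ ≤
              ‖zm‖ * ‖c‖ * ‖zs - zm‖ :=
            mul_le_mul_of_nonneg_right h6 habsnn
          have ha2 : ‖zm‖ * (‖zs - zm‖ * ‖c‖) ≤
              ‖zm‖ * (2 * ((s_ - m) * d₀)) :=
            mul_le_mul_of_nonneg_left hmvt hzm0.le
          have ha5 : ‖zm‖ * d₀ ≤ (Z * (5/4)) * (ε * R₀ / 12) :=
            mul_le_mul h5 h7 hd₀pos.le (by nlinarith [hZ0])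
          have h8 : ε * R₀ * ‖zs - zm‖ ≤ ε * R₀ * (Z * (s_ - m)/4) := by
            nlinarith [ha1, ha2, mul_le_mul_of_nonneg_left ha5 (by linarith : (0:ℝ) ≤ 2 * (s_ - m))]
          have h9 : ‖zs - zm‖ ≤ Z * (s_ - m)/4 :=
            le_of_mul_le_mul_left (by linarith [h8]) hεR₀
          have h10 : ‖zs‖ ≤ ‖zm‖ + ‖zs - zm‖ := by
            calc ‖zs‖ = ‖zm + (zs - zm)‖ := by ring_nf
              _ ≤ _ := norm_add_le _ _
          refine ⟨zs, hzsU, hfσ, ?_⟩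
          calc ‖zs‖ ≤ Z * (1 + m/4) + Z * (s_ - m)/4 := by linarith [hzmB]
            _ = Z * (1 + s_/4) := by ring
      exact absurd (le_csSup hbdd ht₁A) (not_le.2 hmt₁)
    have hmeq : m = τ := le_antisymm hmτ (not_lt.1 hnotlt)
    exact hclosed τ ⟨hτ0, le_of_eq hmeq.symm⟩
  -- Step 3: conclude
  have htn : ∀ n : ℕ, (0:ℝ) ≤ 1 - 1/((n:ℝ)+1) ∧ 1 - 1/((n:ℝ)+1) < 1 := by
    intro n
    constructor
    · have h0 : (0:ℝ) ≤ (n:ℝ) := Nat.cast_nonneg n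
      have h1 : (1:ℝ)/(n+1) ≤ 1 := by
        rw [div_le_one (by positivity)]
        linarith
      linarith
    · have h1 : (0:ℝ) < 1/(n+1) := by positivity
      linarith
  have htP : ∀ n : ℕ, ∃ z : ℂ, z ∈ s.U r ∧ f z = w (1 - 1/((n:ℝ)+1)) ∧
      ‖z‖ ≤ Z * (1 + (1 - 1/((n:ℝ)+1))/4) :=
    fun n => hP _ (htn n).1 (htn n).2
  choose z hzU hfz hbd using htP
  have htm : Tendsto (fun n : ℕ => 1 - 1/((n:ℝ)+1)) atTop (𝓝 1) := by
    have h2 := tendsto_one_div_add_atTop_nhds_zero_nat (𝕜 := ℝ)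
    simpa using tendsto_const_nhds.sub h2
  obtain ⟨zs, hzsU, hfzs, _⟩ := hLL (fun n => 1 - 1/((n:ℝ)+1)) z 1
    (fun n => ⟨(htn n).1, (htn n).2.le⟩) hzU hfz hbd htm ⟨by norm_num, le_refl 1⟩
  rw [hw1] at hfzs
  exact (hm' zs hzsU).2 hfzs
end

section
/- Let f be a transcendental entire function with η_f ≠ 0. Then the set of projections of indirect transcendental singularities of f⁻¹ over finite points is bounded; that is, there exists R > 0 such that f has no indirect singularity over any a ∈ ℂ with |a| > R. -/
open Complex Set Metric Filter Topology Bornology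
open scoped ENNReal

section Aux
variable {f : ℂ → ℂ}

lemma entire_strict (hfd : Differentiable ℂ f) (z : ℂ) : HasStrictDerivAt f (deriv f z) z :=
  ((hfd.contDiff (n := 1)).contDiffAt).hasStrictDerivAt one_ne_zero

lemma entire_deriv_cont (hfd : Differentiable ℂ f) : Continuous (deriv f) :=
  (hfd.contDiff (n := 1)).continuous_deriv le_rfl

/-- Mean value lower bound on a ball with small oscillation of `deriv f`. -/
lemma mvt_lower (hfd : Differentiable ℂ f) {z₀ c : ℂ} {ρ m : ℝ}
    (hm : ∀ z ∈ closedBall z₀ ρ, ‖deriv f z - c‖ ≤ m)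
    {z z' : ℂ} (hz : z ∈ closedBall z₀ ρ) (hz' : z' ∈ closedBall z₀ ρ) :
    (‖c‖ - m) * ‖z - z'‖ ≤ ‖f z - f z'‖ := by
  set g : ℂ → ℂ := fun w => f w - c * w with hg
  have hg' : ∀ w ∈ closedBall z₀ ρ, HasDerivWithinAt g (deriv f w - c) (closedBall z₀ ρ) w := by
    intro w _
    have h1 : HasDerivAt g (deriv f w - c * 1) w :=
      ((hfd w).hasDerivAt).sub ((hasDerivAt_id w).const_mul c)
    simpa using h1.hasDerivWithinAt
  have hmvt : ‖g z - g z'‖ ≤ m * ‖z - z'‖ :=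
    (convex_closedBall z₀ ρ).norm_image_sub_le_of_norm_hasDerivWithin_le hg'
      (fun w hw => hm w hw) hz' hz
  have hid : f z - f z' = (g z - g z') + c * (z - z') := by simp only [hg]; ring
  have h2 : ‖c * (z - z')‖ - ‖g z - g z'‖ ≤ ‖f z - f z'‖ := by
    rw [hid]
    have := norm_add_le (-(g z - g z')) ((g z - g z') + c * (z - z'))
    simp only [neg_add_cancel_left, norm_neg] at this
    linarith
  calc (‖c‖ - m) * ‖z - z'‖ = ‖c‖ * ‖z - z'‖ - m * ‖z - z'‖ := by ring
    _ ≤ ‖c * (z - z')‖ - ‖g z - g z'‖ := by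
        rw [norm_mul]; exact sub_le_sub le_rfl hmvt
    _ ≤ ‖f z - f z'‖ := h2


/-- Radius of small oscillation of the derivative. -/
lemma osc_radius (hfd : Differentiable ℂ f) (z₀ : ℂ) {m : ℝ} (hm : 0 < m) :
    ∃ ρ > 0, ∀ z ∈ closedBall z₀ ρ, ‖deriv f z - deriv f z₀‖ ≤ m := by
  have hc : ContinuousAt (deriv f) z₀ := (entire_deriv_cont hfd).continuousAt
  rcases Metric.continuousAt_iff.mp hc m hm with ⟨δ, hδ, hδ'⟩
  refine ⟨δ/2, by linarith, fun z hz => ?_⟩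
  have : dist z z₀ < δ := lt_of_le_of_lt (mem_closedBall.mp hz) (by linarith)
  have := hδ' this
  rw [dist_eq_norm] at this
  exact this.le

/-- Quantitative-enough local inverse. -/
lemma local_inverse (hfd : Differentiable ℂ f) {z₀ : ℂ} (h0 : deriv f z₀ ≠ 0) {ρ : ℝ}
    (hρ : 0 < ρ) :
    ∃ ε > 0, ∃ φ : ℂ → ℂ, φ (f z₀) = z₀ ∧
      ∀ y ∈ ball (f z₀) ε, f (φ y) = y ∧ φ y ∈ ball z₀ ρ := by
  have hs := entire_strict hfd z₀
  set φ := hs.localInverse f (deriv f z₀) z₀ h0 with hφdef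
  have h1 : φ (f z₀) = z₀ := (hs.hasStrictFDerivAt_equiv h0).localInverse_apply_image
  have h2 : ∀ᶠ y in 𝓝 (f z₀), f (φ y) = y :=
    (hs.hasStrictFDerivAt_equiv h0).eventually_right_inverse
  have h3 : ContinuousAt φ (f z₀) := (hs.hasStrictFDerivAt_equiv h0).localInverse_continuousAt
  have h4 : ∀ᶠ y in 𝓝 (f z₀), φ y ∈ ball z₀ ρ := by
    have : ball z₀ ρ ∈ 𝓝 z₀ := ball_mem_nhds z₀ hρ
    have h5 := h3.preimage_mem_nhds (by rw [h1]; exact this)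
    exact h5
  rcases Metric.eventually_nhds_iff_ball.mp (h2.and h4) with ⟨ε, hε, hb⟩
  exact ⟨ε, hε, φ, h1, fun y hy => hb y hy⟩


/-- Slaving/stability of lifts along a compact lift `u` of `γ₁`. -/
lemma slave (hfd : Differentiable ℂ f) {d : ℝ} (hd : 0 < d) {Q : Set ℂ}
    (hQ : ∀ z, f z ∈ Q → d ≤ ‖z‖ * ‖deriv f z‖)
    {u γ₁ : ℝ → ℂ} {b : ℝ} (hb : 0 ≤ b)
    (hu : ContinuousOn u (Icc 0 b))
    (hfu : ∀ t ∈ Icc 0 b, f (u t) = γ₁ t)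
    (hγQ : ∀ t ∈ Icc 0 b, γ₁ t ∈ Q) :
    ∃ ε₀ > 0, ∃ C > 0, ∀ (v γ₂ : ℝ → ℂ) (e : ℝ),
      ContinuousOn v (Icc 0 b) → (∀ t ∈ Icc 0 b, f (v t) = γ₂ t) →
      (∀ t ∈ Icc 0 b, ‖γ₂ t - γ₁ t‖ ≤ e) → v 0 = u 0 → 0 ≤ e → e ≤ ε₀ →
      ∀ t ∈ Icc 0 b, ‖v t - u t‖ ≤ C * e ∧ (γ₂ t = γ₁ t → v t = u t) := by
  have h0b : (0:ℝ) ∈ Icc 0 b := ⟨le_refl 0, hb⟩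
  set K := u '' Icc 0 b with hK
  have hKcp : IsCompact K := isCompact_Icc.image_of_continuousOn hu
  have hKne : K.Nonempty := ⟨u 0, mem_image_of_mem u h0b⟩
  obtain ⟨zm, hzmK, hmin⟩ :=
    hKcp.exists_isMinOn (f := fun z => ‖deriv f z‖) hKne
      ((entire_deriv_cont hfd).norm.continuousOn)
  set m₀ := ‖deriv f zm‖ with hm₀
  have hm₀pos : 0 < m₀ := by
    rcases hzmK with ⟨tm, htm, rfl⟩
    have h1 : f (u tm) ∈ Q := by rw [hfu tm htm]; exact hγQ tm htm
    have h2 := hQ (u tm) h1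
    apply norm_pos_iff.mpr
    intro hz
    rw [hz] at h2
    simp at h2
    linarith
  have hmlow : ∀ z ∈ K, m₀ ≤ ‖deriv f z‖ := fun z hz => hmin hz
  obtain ⟨RK, hRK⟩ := hKcp.isBounded.subset_closedBall 0
  have hK1cp : IsCompact (closedBall (0:ℂ) (RK + 1)) := isCompact_closedBall 0 _
  have huc := hK1cp.uniformContinuousOn_of_continuous (entire_deriv_cont hfd).continuousOn
  rw [Metric.uniformContinuousOn_iff] at huc
  obtain ⟨δ₁, hδ₁, hδ⟩ := huc (m₀/2) (by linarith)
  set ρ := min (δ₁/2) 1 with hρdef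
  have hρpos : 0 < ρ := lt_min (by linarith) one_pos
  have hRKnn : 0 ≤ RK := by
    rcases hKne with ⟨z, hz⟩
    have := hRK hz
    simp only [mem_closedBall, dist_zero_right] at this
    linarith [norm_nonneg z]
  -- key MVT lower bound around each point of the lift
  have hkey : ∀ t ∈ Icc 0 b, ∀ z ∈ closedBall (u t) ρ, ∀ z' ∈ closedBall (u t) ρ,
      (m₀/2) * ‖z - z'‖ ≤ ‖f z - f z'‖ := by
    intro t ht z hz z' hz'
    have hut : u t ∈ K := mem_image_of_mem u ht
    have hutb : ‖u t‖ ≤ RK := by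
      have := hRK hut; simpa [dist_zero_right] using this
    have hosc : ∀ w ∈ closedBall (u t) ρ, ‖deriv f w - deriv f (u t)‖ ≤ m₀/2 := by
      intro w hw
      have hwK1 : w ∈ closedBall (0:ℂ) (RK + 1) := by
        simp only [mem_closedBall, dist_zero_right]
        have h1 : dist w (u t) ≤ ρ := mem_closedBall.mp hw
        calc ‖w‖ ≤ ‖u t‖ + dist w (u t) := by
              rw [dist_eq_norm]
              calc ‖w‖ = ‖u t + (w - u t)‖ := by ring_nf
                _ ≤ ‖u t‖ + ‖w - u t‖ := norm_add_le _ _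
          _ ≤ RK + 1 := by have : ρ ≤ 1 := min_le_right _ _; linarith
      have hutK1 : u t ∈ closedBall (0:ℂ) (RK + 1) := by
        simp only [mem_closedBall, dist_zero_right]; linarith
      have hdist : dist w (u t) < δ₁ := by
        have h1 : dist w (u t) ≤ ρ := mem_closedBall.mp hw
        have : ρ ≤ δ₁/2 := min_le_left _ _
        linarith
      have := hδ w hwK1 (u t) hutK1 hdist
      rw [dist_eq_norm] at this
      exact this.le
    have hmvt := mvt_lower hfd hosc hz hz'
    have h2 : m₀ ≤ ‖deriv f (u t)‖ := hmlow _ hut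
    nlinarith [norm_nonneg (z - z'), norm_nonneg (f z - f z')]
  refine ⟨m₀ * ρ / 8, by positivity, 2 / m₀, by positivity, ?_⟩
  intro v γ₂ e hv hfv he hv0 he0 heε
  -- the continuation argument on the connected space Icc 0 b
  haveI : PreconnectedSpace (Icc (0:ℝ) b) := Subtype.preconnectedSpace isPreconnected_Icc
  set X := Icc (0:ℝ) b
  have hUc : Continuous (fun x : X => u x) := continuousOn_iff_continuous_restrict.mp hu
  have hVc : Continuous (fun x : X => v x) := continuousOn_iff_continuous_restrict.mp hv
  set B := {x : X | ‖v x - u x‖ ≤ ρ/2} with hBdef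
  have forced : ∀ x : X, ‖v x.1 - u x.1‖ ≤ ρ → ‖v x.1 - u x.1‖ ≤ ρ/4 := by
    intro x hx
    have hxI : x.1 ∈ Icc 0 b := x.2
    have h1 : v x.1 ∈ closedBall (u x.1) ρ := by
      simp only [mem_closedBall, dist_eq_norm]; exact hx
    have h2 : u x.1 ∈ closedBall (u x.1) ρ := mem_closedBall_self hρpos.le
    have h3 := hkey x.1 hxI (v x.1) h1 (u x.1) h2
    rw [hfv x.1 hxI, hfu x.1 hxI] at h3
    have h4 : ‖γ₂ x.1 - γ₁ x.1‖ ≤ e := he x.1 hxI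
    nlinarith
  have hBclosed : IsClosed B :=
    isClosed_le (Continuous.norm (hVc.sub hUc)) continuous_const
  have hBopen : IsOpen B := by
    rw [isOpen_iff_mem_nhds]
    intro x hx
    have hst : ‖v x.1 - u x.1‖ ≤ ρ/4 := forced x (le_trans hx (by linarith))
    have : {y : X | ‖v y.1 - u y.1‖ < ρ/2} ∈ 𝓝 x := by
      apply IsOpen.mem_nhds
      · exact isOpen_lt (Continuous.norm (hVc.sub hUc)) continuous_const
      · show ‖v x.1 - u x.1‖ < ρ/2
        linarith
    exact Filter.mem_of_superset this
      (fun y hy => show ‖v y.1 - u y.1‖ ≤ ρ/2 from le_of_lt hy)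
  have hBne : B.Nonempty := by
    refine ⟨⟨0, h0b⟩, ?_⟩
    show ‖v 0 - u 0‖ ≤ ρ/2
    rw [hv0]; simp; positivity
  have hBuniv : B = univ := (IsClopen.eq_univ ⟨hBclosed, hBopen⟩ hBne)
  intro t ht
  have hxB : (⟨t, ht⟩ : X) ∈ B := by rw [hBuniv]; trivial
  have hρb : ‖v t - u t‖ ≤ ρ := le_trans hxB (by linarith)
  have h1 : v t ∈ closedBall (u t) ρ := by simp only [mem_closedBall, dist_eq_norm]; exact hρb
  have h2 : u t ∈ closedBall (u t) ρ := mem_closedBall_self hρpos.le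
  have h3 := hkey t ht (v t) h1 (u t) h2
  rw [hfv t ht, hfu t ht] at h3
  have h4 : ‖γ₂ t - γ₁ t‖ ≤ e := he t ht
  constructor
  · rw [div_mul_eq_mul_div, le_div_iff₀ hm₀pos]
    nlinarith
  · intro heq
    rw [heq] at h3
    simp only [sub_self, norm_zero] at h3
    have h5 : ‖v t - u t‖ ≤ 0 := by nlinarith
    have := le_antisymm h5 (norm_nonneg _)
    rwa [norm_sub_eq_zero_iff] at this


lemma lipcont {u : ℝ → ℂ} {L c b : ℝ} (hL : 0 ≤ L)
    (h : ∀ x ∈ Icc c b, ∀ y ∈ Icc c b, ‖u x - u y‖ ≤ L * |x - y|) :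
    ContinuousOn u (Icc c b) := by
  have : LipschitzOnWith L.toNNReal u (Icc c b) := by
    apply LipschitzOnWith.of_dist_le_mul
    intro x hx y hy
    rw [dist_eq_norm, dist_eq_norm, Real.coe_toNNReal L hL]
    simpa [Real.norm_eq_abs] using h x hx y hy
  exact this.continuousOn


set_option maxHeartbeats 2000000 in
lemma lift_exists (hfd : Differentiable ℂ f) {d M : ℝ} (hd : 0 < d) (hM : 0 < M) {Q : Set ℂ}
    (hQ : ∀ z, f z ∈ Q → d ≤ ‖z‖ * ‖deriv f z‖)
    {γ : ℝ → ℂ} (hγl : ∀ s ∈ Icc (0:ℝ) 1, ∀ t ∈ Icc (0:ℝ) 1, ‖γ s - γ t‖ ≤ M * |s - t|)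
    (hγQ : ∀ t ∈ Icc (0:ℝ) 1, γ t ∈ Q)
    {z₀ : ℂ} (hz₀ : f z₀ = γ 0) :
    ∃ u : ℝ → ℂ, ContinuousOn u (Icc 0 1) ∧ u 0 = z₀ ∧ ∀ t ∈ Icc 0 1, f (u t) = γ t := by
  classical
  have h01 : (0:ℝ) ∈ Icc (0:ℝ) 1 := ⟨le_refl 0, zero_le_one⟩
  have hz₀Q : f z₀ ∈ Q := by rw [hz₀]; exact hγQ 0 h01
  have hdz₀ := hQ z₀ hz₀Q
  have hB₀pos : 0 < ‖z₀‖ := by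
    rcases (norm_nonneg z₀).lt_or_eq with h | h
    · exact h
    · exfalso; rw [← h] at hdz₀; simp at hdz₀; linarith
  set B₀ := ‖z₀‖ with hB₀
  set κ := 2 * M / d with hκ
  have hκpos : 0 < κ := by positivity
  set G : ℝ → ℝ := fun t => B₀ * Real.exp (κ * t) with hG
  have hGpos : ∀ t, 0 < G t := fun t => by positivity
  have hGmono : ∀ s t, s ≤ t → G s ≤ G t := by
    intro s t hst
    have := Real.exp_le_exp.mpr (mul_le_mul_of_nonneg_left hst hκpos.le)
    exact mul_le_mul_of_nonneg_left this hB₀pos.le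
  set L := 2 * G 1 * M / d with hL
  have hLpos : 0 < L := by positivity
  set Good : ℝ → Prop := fun b => ∃ u : ℝ → ℂ, u 0 = z₀ ∧
      (∀ x ∈ Icc (0:ℝ) b, ∀ y ∈ Icc (0:ℝ) b, ‖u x - u y‖ ≤ L * |x - y|) ∧
      ∀ t ∈ Icc (0:ℝ) b, f (u t) = γ t ∧ ‖u t‖ ≤ G t with hGoodDef
  set A : Set ℝ := {b : ℝ | b ∈ Icc (0:ℝ) 1 ∧ Good b} with hA
  have h0A : (0:ℝ) ∈ A := by
    refine ⟨h01, fun _ => z₀, rfl, ?_, ?_⟩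
    · intro x hx y hy
      have hx0 : x = 0 := le_antisymm (hx.2.trans le_rfl) hx.1
      have hy0 : y = 0 := le_antisymm (hy.2.trans le_rfl) hy.1
      subst hx0; subst hy0; simp
    · intro t ht
      have ht0 : t = 0 := le_antisymm ht.2 ht.1
      subst ht0
      refine ⟨hz₀, ?_⟩
      simp only [hG, mul_zero, Real.exp_zero, mul_one, hB₀]; exact le_rfl
  have hAbdd : BddAbove A := ⟨1, fun b hb => hb.1.2⟩
  have hAne : A.Nonempty := ⟨0, h0A⟩
  set b₁ := sSup A with hb₁
  have hb₁0 : 0 ≤ b₁ := le_csSup hAbdd h0A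
  have hb₁1 : b₁ ≤ 1 := csSup_le hAne (fun b hb => hb.1.2)
  have hdown : ∀ b b' : ℝ, 0 ≤ b' → b' ≤ b → Good b → Good b' := by
    intro b b' hb'0 hb'b ⟨u, hu0, hul, hup⟩
    exact ⟨u, hu0, fun x hx y hy => hul x (Icc_subset_Icc le_rfl hb'b hx) y
      (Icc_subset_Icc le_rfl hb'b hy), fun t ht => hup t (Icc_subset_Icc le_rfl hb'b ht)⟩
  -- uniqueness of lifts on [0,b]
  have huniq : ∀ b ∈ Icc (0:ℝ) 1, ∀ u v : ℝ → ℂ, ContinuousOn u (Icc 0 b) →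
      ContinuousOn v (Icc 0 b) → (∀ t ∈ Icc (0:ℝ) b, f (u t) = γ t) →
      (∀ t ∈ Icc (0:ℝ) b, f (v t) = γ t) → v 0 = u 0 → ∀ t ∈ Icc (0:ℝ) b, v t = u t := by
    intro b hb u v hu hv hfu hfv h0
    have hbQ : ∀ t ∈ Icc (0:ℝ) b, γ t ∈ Q :=
      fun t ht => hγQ t (Icc_subset_Icc le_rfl hb.2 ht)
    obtain ⟨ε₀, hε₀, C, hC, hsl⟩ := slave hfd hd hQ hb.1 hu hfu hbQ
    intro t ht
    exact ((hsl v γ 0 hv hfv (fun t ht => by simp) h0 le_rfl hε₀.le) t ht).2 rfl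
  -- canonical choice of lifts
  set uu : ℝ → ℝ → ℂ := fun b => if h : Good b then h.choose else fun _ => z₀ with huu
  have huuspec : ∀ b : ℝ, Good b → ((uu b) 0 = z₀ ∧
      (∀ x ∈ Icc (0:ℝ) b, ∀ y ∈ Icc (0:ℝ) b, ‖uu b x - uu b y‖ ≤ L * |x - y|) ∧
      ∀ t ∈ Icc (0:ℝ) b, f (uu b t) = γ t ∧ ‖uu b t‖ ≤ G t) := by
    intro b hb
    have heq : uu b = hb.choose := by rw [huu]; simp only [dif_pos hb]
    rw [heq]
    exact hb.choose_spec
  have hcont : ∀ b : ℝ, Good b → ContinuousOn (uu b) (Icc 0 b) :=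
    fun b hb => lipcont hLpos.le (huuspec b hb).2.1
  have hcoh : ∀ b b' : ℝ, b ∈ A → b' ∈ A → ∀ t, 0 ≤ t → t ≤ b → t ≤ b' →
      uu b t = uu b' t := by
    intro b b' hbA hb'A t ht0 htb htb'
    set m := min b b' with hm
    have hmA : m ∈ Icc (0:ℝ) 1 := ⟨le_min hbA.1.1 hb'A.1.1, (min_le_left _ _).trans hbA.1.2⟩
    have hsub : Icc (0:ℝ) m ⊆ Icc 0 b := Icc_subset_Icc le_rfl (min_le_left _ _)
    have hsub' : Icc (0:ℝ) m ⊆ Icc 0 b' := Icc_subset_Icc le_rfl (min_le_right _ _)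
    have := huniq m hmA (uu b) (uu b')
      ((hcont b hbA.2).mono hsub) ((hcont b' hb'A.2).mono hsub')
      (fun t ht => ((huuspec b hbA.2).2.2 t (hsub ht)).1)
      (fun t ht => ((huuspec b' hb'A.2).2.2 t (hsub' ht)).1)
      (by rw [(huuspec b hbA.2).1, (huuspec b' hb'A.2).1])
    exact (this t ⟨ht0, le_min htb htb'⟩).symm
  have hIco : ∀ t : ℝ, 0 ≤ t → t < b₁ → t ∈ A := by
    intro t ht0 htb
    obtain ⟨b, hbA, htb'⟩ := exists_lt_of_lt_csSup hAne htb
    exact ⟨⟨ht0, htb'.le.trans hbA.1.2⟩, hdown b t ht0 htb'.le hbA.2⟩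
  -- the supremum belongs to A
  have hb₁A : b₁ ∈ A := by
    by_contra hnot
    have hb₁pos : 0 < b₁ := by
      rcases hb₁0.lt_or_eq with hlt | heq0
      · exact hlt
      · exfalso; apply hnot; rwa [← heq0]
    set g : ℝ → ℂ := fun t => uu t t with hg
    have hgA : ∀ t, 0 ≤ t → t < b₁ → (f (g t) = γ t ∧ ‖g t‖ ≤ G t) := by
      intro t ht0 htb
      have htA := hIco t ht0 htb
      exact (huuspec t htA.2).2.2 t ⟨ht0, le_rfl⟩
    have hg0 : g 0 = z₀ := (huuspec 0 h0A.2).1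
    have hgeq : ∀ t b, 0 ≤ t → t ≤ b → b ∈ A → g t = uu b t := by
      intro t b ht0 htb hbA
      have htA : t ∈ A := ⟨⟨ht0, htb.trans hbA.1.2⟩, hdown b t ht0 htb hbA.2⟩
      exact hcoh t b htA hbA t ht0 le_rfl htb
    have hgLip : ∀ x y : ℝ, 0 ≤ x → x < b₁ → 0 ≤ y → y < b₁ →
        ‖g x - g y‖ ≤ L * |x - y| := by
      intro x y hx0 hxb hy0 hyb
      rcases le_total x y with hxy | hxy
      · have hyA := hIco y hy0 hyb
        rw [hgeq x y hx0 hxy hyA, hgeq y y hy0 le_rfl hyA]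
        exact (huuspec y hyA.2).2.1 x ⟨hx0, hxy⟩ y ⟨hy0, le_rfl⟩
      · have hxA := hIco x hx0 hxb
        rw [hgeq x x hx0 le_rfl hxA, hgeq y x hy0 hxy hxA]
        exact (huuspec x hxA.2).2.1 x ⟨hx0, le_rfl⟩ y ⟨hy0, hxy⟩
    set bn : ℕ → ℝ := fun n => b₁ - b₁ / (n + 2) with hbn
    have hbn0 : ∀ n, 0 ≤ bn n := by
      intro n
      have h2 : b₁ / ((n:ℝ)+2) ≤ b₁ := div_le_self hb₁0 (by
        have : (0:ℝ) ≤ (n:ℝ) := Nat.cast_nonneg n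
        linarith)
      simp only [hbn]; linarith
    have hbnlt : ∀ n, bn n < b₁ := by
      intro n
      have h2 : 0 < b₁ / ((n:ℝ)+2) := div_pos hb₁pos (by positivity)
      simp only [hbn]; linarith
    have hbnt : Tendsto bn atTop (𝓝 b₁) := by
      have h1 : Tendsto (fun n : ℕ => ((n:ℝ) + 2)) atTop atTop :=
        tendsto_atTop_add_const_right _ 2 tendsto_natCast_atTop_atTop
      have h2 : Tendsto (fun n : ℕ => b₁ / ((n:ℝ)+2)) atTop (𝓝 0) :=
        Tendsto.div_atTop tendsto_const_nhds h1
      have h3 := (tendsto_const_nhds (x := b₁) (f := (atTop : Filter ℕ))).sub h2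
      simpa using h3
    have hgb : CauchySeq (fun n => g (bn n)) := by
      rw [Metric.cauchySeq_iff]
      intro ε hε
      have hbc : CauchySeq bn := hbnt.cauchySeq
      rw [Metric.cauchySeq_iff] at hbc
      obtain ⟨N, hN⟩ := hbc (ε / (L + 1)) (by positivity)
      refine ⟨N, fun m hm n hn => ?_⟩
      have h1 := hN m hm n hn
      have h2 := hgLip (bn m) (bn n) (hbn0 m) (hbnlt m) (hbn0 n) (hbnlt n)
      rw [dist_eq_norm] at h1 ⊢
      have h3 : L * |bn m - bn n| ≤ L * (ε / (L+1)) := by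
        apply mul_le_mul_of_nonneg_left _ hLpos.le
        rw [← Real.norm_eq_abs]; exact h1.le
      have h4 : L * (ε / (L+1)) < ε := by
        rw [mul_comm, div_mul_eq_mul_div, div_lt_iff₀ (by positivity)]
        nlinarith
      calc ‖g (bn m) - g (bn n)‖ ≤ L * |bn m - bn n| := h2
        _ ≤ L * (ε / (L+1)) := h3
        _ < ε := h4
    obtain ⟨w, hw⟩ := cauchySeq_tendsto_of_complete hgb
    have hγbn : Tendsto (fun n => γ (bn n)) atTop (𝓝 (γ b₁)) := by
      rw [tendsto_iff_dist_tendsto_zero]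
      have hble : ∀ n, dist (γ (bn n)) (γ b₁) ≤ M * (b₁ / (n+2)) := by
        intro n
        have h1 : bn n ∈ Icc (0:ℝ) 1 := ⟨hbn0 n, (hbnlt n).le.trans hb₁1⟩
        have h2 := hγl (bn n) h1 b₁ ⟨hb₁0, hb₁1⟩
        rw [dist_eq_norm]
        have h3 : |bn n - b₁| = b₁ / (n+2) := by
          simp only [hbn]
          rw [abs_of_nonpos (by
            have h2' : 0 < b₁ / ((n:ℝ)+2) := div_pos hb₁pos (by positivity)
            linarith)]
          ring
        rw [h3] at h2; exact h2
      apply squeeze_zero (fun n => dist_nonneg) hble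
      have h1 : Tendsto (fun n : ℕ => ((n:ℝ) + 2)) atTop atTop :=
        tendsto_atTop_add_const_right _ 2 tendsto_natCast_atTop_atTop
      have h2 : Tendsto (fun n : ℕ => b₁ / ((n:ℝ)+2)) atTop (𝓝 0) :=
        Tendsto.div_atTop tendsto_const_nhds h1
      have h3 := h2.const_mul M
      simpa using h3
    have hfw : f w = γ b₁ := by
      have h1 : Tendsto (fun n => f (g (bn n))) atTop (𝓝 (f w)) :=
        (hfd.continuous.continuousAt.tendsto).comp hw
      have h2 : (fun n => f (g (bn n))) = fun n => γ (bn n) := by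
        funext n; exact (hgA (bn n) (hbn0 n) (hbnlt n)).1
      rw [h2] at h1
      exact tendsto_nhds_unique h1 hγbn
    have hGcont : Continuous G := by
      apply Continuous.mul continuous_const
      exact Real.continuous_exp.comp (continuous_const.mul continuous_id)
    have hwG : ‖w‖ ≤ G b₁ := by
      have h1 : Tendsto (fun n => ‖g (bn n)‖) atTop (𝓝 ‖w‖) := hw.norm
      have h2 : Tendsto (fun n => G (bn n)) atTop (𝓝 (G b₁)) :=
        (hGcont.continuousAt.tendsto).comp hbnt
      exact le_of_tendsto_of_tendsto' h1 h2 (fun n => (hgA (bn n) (hbn0 n) (hbnlt n)).2)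
    set u1 : ℝ → ℂ := fun t => if t < b₁ then g t else w with hu1
    have hcross : ∀ x, 0 ≤ x → x < b₁ → ‖g x - w‖ ≤ L * |x - b₁| := by
      intro x hx0 hxb
      have h1 : Tendsto (fun n => ‖g x - g (bn n)‖) atTop (𝓝 ‖g x - w‖) :=
        (tendsto_const_nhds.sub hw).norm
      have h2 : Tendsto (fun n => L * |x - bn n|) atTop (𝓝 (L * |x - b₁|)) :=
        ((tendsto_const_nhds.sub hbnt).abs).const_mul L
      exact le_of_tendsto_of_tendsto' h1 h2
        (fun n => hgLip x (bn n) hx0 hxb (hbn0 n) (hbnlt n))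
    have hGoodb₁ : Good b₁ := by
      refine ⟨u1, ?_, ?_, ?_⟩
      · simp only [hu1, if_pos hb₁pos]; exact hg0
      · intro x hx y hy
        by_cases hx' : x < b₁ <;> by_cases hy' : y < b₁
        · simp only [hu1, if_pos hx', if_pos hy']
          exact hgLip x y hx.1 hx' hy.1 hy'
        · have hyb : y = b₁ := le_antisymm hy.2 (not_lt.mp hy')
          simp only [hu1, if_pos hx', if_neg hy']
          rw [hyb]
          exact hcross x hx.1 hx'
        · have hxb : x = b₁ := le_antisymm hx.2 (not_lt.mp hx')
          simp only [hu1, if_neg hx', if_pos hy']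
          rw [hxb, norm_sub_rev, abs_sub_comm]
          exact hcross y hy.1 hy'
        · simp only [hu1, if_neg hx', if_neg hy']
          simp [abs_nonneg, mul_nonneg hLpos.le (abs_nonneg _)]
      · intro t ht
        by_cases ht' : t < b₁
        · simp only [hu1, if_pos ht']
          exact hgA t ht.1 ht'
        · have htb : t = b₁ := le_antisymm ht.2 (not_lt.mp ht')
          simp only [hu1, if_neg ht']
          rw [htb]
          exact ⟨hfw, hwG⟩
    exact hnot ⟨⟨hb₁0, hb₁1⟩, hGoodb₁⟩
  -- the supremum must be 1
  have hb₁eq : b₁ = 1 := by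
    by_contra hne
    have hb₁lt : b₁ < 1 := lt_of_le_of_ne hb₁1 hne
    have hUs := huuspec b₁ hb₁A.2
    set U := uu b₁ with hUdef
    set zs := U b₁ with hzs
    have hb₁I : b₁ ∈ Icc (0:ℝ) b₁ := ⟨hb₁0, le_rfl⟩
    have hfzs : f zs = γ b₁ := (hUs.2.2 b₁ hb₁I).1
    have hzsG : ‖zs‖ ≤ G b₁ := (hUs.2.2 b₁ hb₁I).2
    have hzsQ : f zs ∈ Q := by rw [hfzs]; exact hγQ b₁ ⟨hb₁0, hb₁1⟩
    have hdzs := hQ zs hzsQ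
    have hf's : deriv f zs ≠ 0 := by
      intro h0; rw [h0] at hdzs; simp at hdzs; linarith
    have hf'pos : 0 < ‖deriv f zs‖ := norm_pos_iff.mpr hf's
    have hzspos : 0 < ‖zs‖ := by
      rcases (norm_nonneg zs).lt_or_eq with hlt | heq0
      · exact hlt
      · exfalso; rw [← heq0] at hdzs; simp at hdzs; linarith
    obtain ⟨ρ, hρpos, hosc⟩ := osc_radius hfd zs (m := ‖deriv f zs‖ / 2) (by positivity)
    obtain ⟨ε, hεpos, φ, hφ0, hφ⟩ := local_inverse hfd hf's hρpos
    have hinv : ∀ y ∈ ball (f zs) ε, ∀ y' ∈ ball (f zs) ε,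
        ‖φ y - φ y'‖ ≤ 2 / ‖deriv f zs‖ * ‖y - y'‖ := by
      intro y hy y' hy'
      have h1 := (hφ y hy).2
      have h2 := (hφ y' hy').2
      have h3 := mvt_lower hfd hosc (ball_subset_closedBall h1) (ball_subset_closedBall h2)
      rw [(hφ y hy).1, (hφ y' hy').1] at h3
      rw [div_mul_eq_mul_div, le_div_iff₀ hf'pos]
      nlinarith [norm_nonneg (φ y - φ y'), norm_nonneg (y - y')]
    have hcoef : 2 / ‖deriv f zs‖ ≤ 2 * ‖zs‖ / d := by
      rw [div_le_div_iff₀ hf'pos hd]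
      nlinarith
    set h := min (1 - b₁) (ε / (2 * M)) with hh
    have hhpos : 0 < h := lt_min (by linarith) (by positivity)
    set b2 := b₁ + h with hb2
    have hb2mem : b2 ∈ Icc (0:ℝ) 1 := by
      constructor
      · simp only [hb2]; linarith
      · have := min_le_left (1 - b₁) (ε / (2*M))
        simp only [hb2, hh]; linarith
    have hγnear : ∀ t, b₁ < t → t ≤ b2 → ‖γ t - f zs‖ ≤ M * (t - b₁) := by
      intro t h1 h2
      rw [hfzs]
      have htI : t ∈ Icc (0:ℝ) 1 := ⟨by linarith, h2.trans hb2mem.2⟩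
      have h3 := hγl t htI b₁ ⟨hb₁0, hb₁1⟩
      rwa [abs_of_pos (by linarith : (0:ℝ) < t - b₁)] at h3
    have hMh : M * h ≤ ε / 2 := by
      have h1 : h ≤ ε / (2*M) := min_le_right _ _
      have h2 : M * h ≤ M * (ε / (2*M)) := mul_le_mul_of_nonneg_left h1 hM.le
      have h3 : M * (ε / (2*M)) = ε / 2 := by field_simp
      linarith
    have hγball : ∀ t, b₁ < t → t ≤ b2 → γ t ∈ ball (f zs) ε := by
      intro t h1 h2
      rw [mem_ball, dist_eq_norm]
      have h3 := hγnear t h1 h2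
      have h4 : t - b₁ ≤ h := by simp only [hb2] at h2; linarith
      have h5 : M * (t - b₁) ≤ M * h := mul_le_mul_of_nonneg_left h4 hM.le
      linarith
    set u2 : ℝ → ℂ := fun t => if t ≤ b₁ then U t else φ (γ t) with hu2
    have hself : f zs ∈ ball (f zs) ε := mem_ball_self hεpos
    have hφbd : ∀ t, b₁ < t → t ≤ b2 → ‖φ (γ t) - zs‖ ≤ 2 / ‖deriv f zs‖ * (M * (t - b₁)) := by
      intro t h1 h2
      have h3 := hinv (γ t) (hγball t h1 h2) (f zs) hself
      rw [hφ0] at h3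
      calc ‖φ (γ t) - zs‖ ≤ 2 / ‖deriv f zs‖ * ‖γ t - f zs‖ := h3
        _ ≤ 2 / ‖deriv f zs‖ * (M * (t - b₁)) := by
            apply mul_le_mul_of_nonneg_left (hγnear t h1 h2) (by positivity)
    have hLcoef : 2 / ‖deriv f zs‖ * M ≤ L := by
      rw [hL, div_mul_eq_mul_div, div_le_div_iff₀ hf'pos hd]
      have h1 : ‖zs‖ ≤ G 1 := hzsG.trans (hGmono b₁ 1 hb₁1)
      have h2 : ‖zs‖ * ‖deriv f zs‖ ≤ G 1 * ‖deriv f zs‖ :=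
        mul_le_mul_of_nonneg_right h1 hf'pos.le
      nlinarith
    have hGoodb2 : Good b2 := by
      refine ⟨u2, ?_, ?_, ?_⟩
      · simp only [hu2, if_pos hb₁0]; exact hUs.1
      · have haux : ∀ x y, x ∈ Icc (0:ℝ) b2 → y ∈ Icc (0:ℝ) b2 → x ≤ y →
            ‖u2 x - u2 y‖ ≤ L * |x - y| := by
          intro x y hx hy hxy
          by_cases hx' : x ≤ b₁ <;> by_cases hy' : y ≤ b₁
          · simp only [hu2, if_pos hx', if_pos hy']
            exact hUs.2.1 x ⟨hx.1, hx'⟩ y ⟨hy.1, hy'⟩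
          · -- x ≤ b₁ < y
            have hyb : b₁ < y := not_le.mp hy'
            simp only [hu2, if_pos hx', if_neg hy']
            have hstep1 : ‖U x - zs‖ ≤ L * (b₁ - x) := by
              have := hUs.2.1 x ⟨hx.1, hx'⟩ b₁ hb₁I
              rwa [abs_of_nonpos (by linarith), neg_sub] at this
            have hstep2 : ‖zs - φ (γ y)‖ ≤ L * (y - b₁) := by
              rw [norm_sub_rev]
              have h3 := hφbd y hyb hy.2
              have h4 : 2 / ‖deriv f zs‖ * (M * (y - b₁)) ≤ L * (y - b₁) := by
                rw [← mul_assoc]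
                apply mul_le_mul_of_nonneg_right hLcoef (by linarith)
              linarith
            have h5 : ‖U x - φ (γ y)‖ ≤ ‖U x - zs‖ + ‖zs - φ (γ y)‖ := by
              have := norm_add_le (U x - zs) (zs - φ (γ y))
              simpa using this
            rw [abs_of_nonpos (by linarith), neg_sub]
            linarith
          · linarith
          · -- b₁ < x ≤ y
            have hxb : b₁ < x := not_le.mp hx'
            simp only [hu2, if_neg hx', if_neg hy']
            have h3 := hinv (γ x) (hγball x hxb hx.2) (γ y) (hγball y (lt_of_lt_of_le hxb hxy) hy.2)
            have h4 : ‖γ x - γ y‖ ≤ M * |x - y| :=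
              hγl x ⟨by linarith, hx.2.trans hb2mem.2⟩ y ⟨hy.1, hy.2.trans hb2mem.2⟩
            calc ‖φ (γ x) - φ (γ y)‖ ≤ 2 / ‖deriv f zs‖ * ‖γ x - γ y‖ := h3
              _ ≤ 2 / ‖deriv f zs‖ * (M * |x - y|) :=
                  mul_le_mul_of_nonneg_left h4 (by positivity)
              _ = (2 / ‖deriv f zs‖ * M) * |x - y| := by ring
              _ ≤ L * |x - y| := mul_le_mul_of_nonneg_right hLcoef (abs_nonneg _)
        intro x hx y hy
        rcases le_total x y with hxy | hxy
        · exact haux x y hx hy hxy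
        · rw [norm_sub_rev, abs_sub_comm]
          exact haux y x hy hx hxy
      · intro t ht
        by_cases ht' : t ≤ b₁
        · simp only [hu2, if_pos ht']
          exact hUs.2.2 t ⟨ht.1, ht'⟩
        · have htb : b₁ < t := not_le.mp ht'
          simp only [hu2, if_neg ht']
          refine ⟨(hφ (γ t) (hγball t htb ht.2)).1, ?_⟩
          have h3 := hφbd t htb ht.2
          have h4 : ‖φ (γ t)‖ ≤ ‖zs‖ + ‖φ (γ t) - zs‖ := by
            have := norm_add_le zs (φ (γ t) - zs)
            simpa using this
          have h5 : 2 / ‖deriv f zs‖ * (M * (t - b₁)) ≤ 2 * ‖zs‖ / d * (M * (t - b₁)) :=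
            mul_le_mul_of_nonneg_right hcoef (mul_nonneg hM.le (by linarith))
          have h6 : ‖zs‖ + 2 * ‖zs‖ / d * (M * (t - b₁)) = ‖zs‖ * (1 + κ * (t - b₁)) := by
            rw [hκ]; ring
          have h7 : ‖zs‖ * (1 + κ * (t - b₁)) ≤ G b₁ * Real.exp (κ * (t - b₁)) := by
            apply mul_le_mul hzsG _ _ (hGpos b₁).le
            · have := Real.add_one_le_exp (κ * (t - b₁))
              linarith
            · have hΔ : (0:ℝ) ≤ t - b₁ := by linarith
              nlinarith [hκpos.le]
          have h8 : G b₁ * Real.exp (κ * (t - b₁)) = G t := by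
            rw [hG]
            show B₀ * Real.exp (κ * b₁) * Real.exp (κ * (t - b₁)) = B₀ * Real.exp (κ * t)
            rw [mul_assoc, ← Real.exp_add]
            ring_nf
          linarith
    have hb2A : b2 ∈ A := ⟨hb2mem, hGoodb2⟩
    have := le_csSup hAbdd hb2A
    rw [← hb₁] at this
    simp only [hb2] at this
    linarith
  -- conclude
  obtain ⟨u, hu0, hul, hup⟩ := hb₁eq ▸ hb₁A.2
  exact ⟨u, lipcont hLpos.le hul, hu0, fun t ht => (hup t ht).1⟩


lemma concat_lip {c₁ c₂ : ℝ → ℂ} {K : ℝ} (hK : 0 ≤ K)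
    (h₁ : ∀ x y, ‖c₁ x - c₁ y‖ ≤ K * |x - y|)
    (h₂ : ∀ x y, ‖c₂ x - c₂ y‖ ≤ K * |x - y|)
    (hj : c₁ 1 = c₂ 0) :
    ∀ x y, ‖(fun t => if t ≤ 1/2 then c₁ (2*t) else c₂ (2*t - 1)) x -
            (fun t => if t ≤ 1/2 then c₁ (2*t) else c₂ (2*t - 1)) y‖ ≤ (2*K) * |x - y| := by
  have haux : ∀ x y, x ≤ y →
      ‖(fun t => if t ≤ 1/2 then c₁ (2*t) else c₂ (2*t - 1)) x -
        (fun t => if t ≤ 1/2 then c₁ (2*t) else c₂ (2*t - 1)) y‖ ≤ (2*K) * |x - y| := by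
    intro x y hxy
    by_cases hx : x ≤ 1/2 <;> by_cases hy : y ≤ 1/2
    · simp only [if_pos hx, if_pos hy]
      calc ‖c₁ (2*x) - c₁ (2*y)‖ ≤ K * |2*x - 2*y| := h₁ _ _
        _ = (2*K) * |x - y| := by rw [show (2*x - 2*y) = 2*(x-y) by ring, abs_mul, _root_.abs_two]; ring
    · simp only [if_pos hx, if_neg hy]
      have hy' : 1/2 < y := not_le.mp hy
      have t1 : ‖c₁ (2*x) - c₁ 1‖ ≤ K * (1 - 2*x) := by
        have := h₁ (2*x) 1
        rwa [abs_of_nonpos (by linarith), neg_sub] at this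
      have t2 : ‖c₂ 0 - c₂ (2*y - 1)‖ ≤ K * (2*y - 1) := by
        have := h₂ 0 (2*y - 1)
        rwa [abs_of_nonpos (by linarith), neg_sub, sub_zero] at this
      have t3 : ‖c₁ (2*x) - c₂ (2*y - 1)‖ ≤ ‖c₁ (2*x) - c₁ 1‖ + ‖c₂ 0 - c₂ (2*y - 1)‖ := by
        have harg : c₁ (2*x) - c₂ (2*y - 1) = (c₁ (2*x) - c₁ 1) + (c₂ 0 - c₂ (2*y - 1)) := by
          rw [hj]; ring
        rw [harg]
        exact norm_add_le _ _
      have habs : |x - y| = y - x := by rw [abs_of_nonpos (by linarith), neg_sub]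
      rw [habs]
      linarith
    · linarith
    · simp only [if_neg hx, if_neg hy]
      calc ‖c₂ (2*x-1) - c₂ (2*y-1)‖ ≤ K * |(2*x-1) - (2*y-1)| := h₂ _ _
        _ = (2*K) * |x - y| := by rw [show ((2*x-1) - (2*y-1)) = 2*(x-y) by ring, abs_mul, _root_.abs_two]; ring
  intro x y
  rcases le_total x y with hxy | hxy
  · exact haux x y hxy
  · rw [norm_sub_rev, abs_sub_comm]
    exact haux y x hxy

lemma exists_path {S : Set ℂ} (hS : IsOpen S) {z₀ : ℂ} (hz₀ : z₀ ∈ S) :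
    ∀ z₁ ∈ connectedComponentIn S z₀, ∃ δ : ℝ → ℂ, ∃ K : ℝ, 0 ≤ K ∧
      (∀ x y, ‖δ x - δ y‖ ≤ K * |x - y|) ∧ δ 0 = z₀ ∧ δ 1 = z₁ ∧
      ∀ t ∈ Icc (0:ℝ) 1, δ t ∈ connectedComponentIn S z₀ := by
  set V := connectedComponentIn S z₀ with hV
  have hVopen : IsOpen V := hS.connectedComponentIn
  have hVpre : IsPreconnected V := isPreconnected_connectedComponentIn
  have hz₀V : z₀ ∈ V := mem_connectedComponentIn hz₀
  set T : Set ℂ := {z | ∃ δ : ℝ → ℂ, ∃ K : ℝ, 0 ≤ K ∧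
      (∀ x y, ‖δ x - δ y‖ ≤ K * |x - y|) ∧ δ 0 = z₀ ∧ δ 1 = z ∧
      ∀ t ∈ Icc (0:ℝ) 1, δ t ∈ V} with hT
  have hstep : ∀ z ∈ T, ∀ e > 0, ball z e ⊆ V → ball z e ⊆ T := by
    intro z hz e he hball w hw
    obtain ⟨δ, K, hK, hlip, hδ0, hδ1, hδV⟩ := hz
    set seg : ℝ → ℂ := fun t => z + (t:ℂ) * (w - z) with hseg
    have hseglip : ∀ x y, ‖seg x - seg y‖ ≤ ‖w - z‖ * |x - y| := by
      intro x y
      have : seg x - seg y = ((x:ℂ) - (y:ℂ)) * (w - z) := by simp only [hseg]; ring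
      rw [this, norm_mul]
      have : ‖((x:ℝ):ℂ) - ((y:ℝ):ℂ)‖ = |x - y| := by
        rw [← Complex.ofReal_sub, Complex.norm_real, Real.norm_eq_abs]
      rw [this]; ring_nf; exact le_rfl
    have hsegV : ∀ t ∈ Icc (0:ℝ) 1, seg t ∈ V := by
      intro t ht
      apply hball
      rw [mem_ball, dist_eq_norm]
      have : seg t - z = (t:ℂ) * (w - z) := by simp only [hseg]; ring
      rw [this, norm_mul]
      have h1 : ‖((t:ℝ):ℂ)‖ = |t| := by rw [Complex.norm_real, Real.norm_eq_abs]
      rw [h1, _root_.abs_of_nonneg ht.1]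
      have h2 : ‖w - z‖ < e := by
        have := mem_ball.mp hw
        rw [dist_eq_norm] at this
        exact this
      have h3 : ‖w - z‖ ≥ 0 := norm_nonneg _
      nlinarith [ht.2]
    refine ⟨fun t => if t ≤ 1/2 then δ (2*t) else seg (2*t - 1),
      2 * max K ‖w - z‖, by positivity, ?_, ?_, ?_, ?_⟩
    · apply concat_lip (le_max_iff.mpr (Or.inl hK))
      · intro x y
        exact (hlip x y).trans (mul_le_mul_of_nonneg_right (le_max_left _ _) (abs_nonneg _))
      · intro x y
        exact (hseglip x y).trans (mul_le_mul_of_nonneg_right (le_max_right _ _) (abs_nonneg _))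
      · simp only [hseg, hδ1]; simp
    · show (if (0:ℝ) ≤ 1/2 then δ (2*0) else seg (2*0 - 1)) = z₀
      rw [if_pos (by norm_num : (0:ℝ) ≤ 1/2)]
      rw [mul_zero]; exact hδ0
    · show (if (1:ℝ) ≤ 1/2 then δ (2*1) else seg (2*1 - 1)) = w
      rw [if_neg (by norm_num : ¬ (1:ℝ) ≤ 1/2)]
      simp only [hseg]; norm_num
    · intro t ht
      show (if t ≤ 1/2 then δ (2*t) else seg (2*t - 1)) ∈ V
      by_cases h : t ≤ 1/2
      · rw [if_pos h]
        exact hδV (2*t) ⟨by linarith [ht.1], by linarith⟩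
      · rw [if_neg h]
        push_neg at h
        exact hsegV (2*t - 1) ⟨by linarith, by linarith [ht.2]⟩
  have hTopen : IsOpen T := by
    rw [isOpen_iff_forall_mem_open]
    intro z hz
    have hzV : z ∈ V := by
      obtain ⟨δ, K, hK, hlip, hδ0, hδ1, hδV⟩ := hz
      rw [← hδ1]; exact hδV 1 ⟨zero_le_one, le_rfl⟩
    obtain ⟨e, he, hball⟩ := Metric.isOpen_iff.mp hVopen z hzV
    exact ⟨ball z e, hstep z hz e he hball, isOpen_ball, mem_ball_self he⟩
  have hWopen : IsOpen {z | z ∈ V ∧ z ∉ T} := by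
    rw [isOpen_iff_forall_mem_open]
    intro z hz
    obtain ⟨e, he, hball⟩ := Metric.isOpen_iff.mp hVopen z hz.1
    refine ⟨ball z (e/2), ?_, isOpen_ball, mem_ball_self (by linarith)⟩
    intro w hw
    have hwV : w ∈ V := hball (ball_subset_ball (by linarith) hw)
    refine ⟨hwV, ?_⟩
    intro hwT
    apply hz.2
    have hd : dist z w < e/2 := by rw [dist_comm]; exact mem_ball.mp hw
    have h1 : z ∈ ball w (e/2) := by rw [mem_ball]; exact hd
    have h2 : ball w (e/2) ⊆ V := by
      intro p hp
      apply hball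
      rw [mem_ball] at hp ⊢
      calc dist p z ≤ dist p w + dist w z := dist_triangle p w z
        _ < e := by
            have hd' : dist w z < e/2 := by rw [dist_comm]; exact hd
            linarith
    exact hstep w hwT (e/2) (by linarith) h2 h1
  have hz₀T : z₀ ∈ T := by
    refine ⟨fun _ => z₀, 0, le_rfl, by simp, rfl, rfl, fun t _ => hz₀V⟩
  have hVT : V ⊆ T := by
    by_contra hns
    rw [not_subset] at hns
    obtain ⟨p, hpV, hpT⟩ := hns
    have := hVpre T {z | z ∈ V ∧ z ∉ T} hTopen hWopen
      (fun z hz => by by_cases h : z ∈ T; exact Or.inl h; exact Or.inr ⟨hz, h⟩)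
      ⟨z₀, hz₀V, hz₀T⟩ ⟨p, hpV, hpV, hpT⟩
    obtain ⟨q, _, hqT, _, hqnT⟩ := this
    exact hqnT hqT
  intro z₁ hz₁
  exact hVT hz₁


set_option maxHeartbeats 1000000 in
/-- Monodromy: if the image path of `δ` stays in a good region and starts/ends at `a`,
then `δ` returns to its start. -/
lemma key_mono (hfd : Differentiable ℂ f) {d : ℝ} (hd : 0 < d) {a : ℂ} {r' : ℝ}
    (hQ : ∀ z, f z ∈ closedBall a r' → d ≤ ‖z‖ * ‖deriv f z‖)
    {δ : ℝ → ℂ} {Mδ : ℝ} (hMδ : 0 < Mδ)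
    (hδc : ContinuousOn δ (Icc 0 1))
    (hδl : ∀ x ∈ Icc (0:ℝ) 1, ∀ y ∈ Icc (0:ℝ) 1, ‖f (δ x) - f (δ y)‖ ≤ Mδ * |x - y|)
    (himg : ∀ t ∈ Icc (0:ℝ) 1, f (δ t) ∈ closedBall a r')
    (h0 : f (δ 0) = a) (h1 : f (δ 1) = a) : δ 1 = δ 0 := by
  classical
  have h01 : (0:ℝ) ∈ Icc (0:ℝ) 1 := ⟨le_rfl, zero_le_one⟩
  have h11 : (1:ℝ) ∈ Icc (0:ℝ) 1 := ⟨zero_le_one, le_rfl⟩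
  have hr'0 : 0 ≤ r' := by
    have := himg 0 h01
    rw [h0] at this
    simpa using this
  set γ : ℝ → ℝ → ℂ := fun s t => a + (s:ℂ) * (f (δ t) - a) with hγ
  have hγQ : ∀ s ∈ Icc (0:ℝ) 1, ∀ t ∈ Icc (0:ℝ) 1, γ s t ∈ closedBall a r' := by
    intro s hs t ht
    rw [mem_closedBall, dist_eq_norm]
    have : γ s t - a = (s:ℂ) * (f (δ t) - a) := by simp only [hγ]; ring
    rw [this, norm_mul, Complex.norm_real, Real.norm_eq_abs, _root_.abs_of_nonneg hs.1]
    have h2 : ‖f (δ t) - a‖ ≤ r' := by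
      have := himg t ht
      rwa [mem_closedBall, dist_eq_norm] at this
    nlinarith [hs.2, norm_nonneg (f (δ t) - a)]
  have hγl : ∀ s ∈ Icc (0:ℝ) 1, ∀ x ∈ Icc (0:ℝ) 1, ∀ y ∈ Icc (0:ℝ) 1,
      ‖γ s x - γ s y‖ ≤ Mδ * |x - y| := by
    intro s hs x hx y hy
    have : γ s x - γ s y = (s:ℂ) * (f (δ x) - f (δ y)) := by simp only [hγ]; ring
    rw [this, norm_mul, Complex.norm_real, Real.norm_eq_abs, _root_.abs_of_nonneg hs.1]
    have h2 := hδl x hx y hy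
    nlinarith [hs.2, norm_nonneg (f (δ x) - f (δ y)), abs_nonneg (x - y),
      mul_le_mul_of_nonneg_left h2 hs.1]
  have hγ0 : ∀ s, γ s 0 = a := by intro s; simp only [hγ, h0]; ring
  have hγ1 : ∀ s, γ s 1 = a := by intro s; simp only [hγ, h1]; ring
  have hγdiff : ∀ s s' : ℝ, ∀ t ∈ Icc (0:ℝ) 1, ‖γ s t - γ s' t‖ ≤ (r' + 1) * |s - s'| := by
    intro s s' t ht
    have : γ s t - γ s' t = ((s:ℂ) - (s':ℂ)) * (f (δ t) - a) := by simp only [hγ]; ring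
    rw [this, norm_mul, ← Complex.ofReal_sub, Complex.norm_real, Real.norm_eq_abs]
    have h2 : ‖f (δ t) - a‖ ≤ r' := by
      have := himg t ht
      rwa [mem_closedBall, dist_eq_norm] at this
    nlinarith [abs_nonneg (s - s'), norm_nonneg (f (δ t) - a)]
  -- lifts for each s
  have hex : ∀ s : ℝ, ∃ u : ℝ → ℂ, s ∈ Icc (0:ℝ) 1 →
      (ContinuousOn u (Icc 0 1) ∧ u 0 = δ 0 ∧ ∀ t ∈ Icc (0:ℝ) 1, f (u t) = γ s t) := by
    intro s
    by_cases hs : s ∈ Icc (0:ℝ) 1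
    · obtain ⟨u, hu⟩ := lift_exists hfd hd hMδ hQ (hγl s hs) (hγQ s hs)
        (by rw [hγ0 s]; exact h0)
      exact ⟨u, fun _ => hu⟩
    · exact ⟨fun _ => 0, fun h => absurd h hs⟩
  choose u hu using hex
  -- local constancy of the endpoint
  have hloc : ∀ s₀ ∈ Icc (0:ℝ) 1, ∃ η > 0, ∀ s ∈ Icc (0:ℝ) 1,
      |s - s₀| < η → u s 1 = u s₀ 1 := by
    intro s₀ hs₀
    obtain ⟨hc₀, h0₀, hl₀⟩ := hu s₀ hs₀
    obtain ⟨ε₀, hε₀, C, hC, hsl⟩ := slave hfd hd hQ zero_le_one hc₀ hl₀ (hγQ s₀ hs₀)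
    refine ⟨ε₀ / (r' + 1), by positivity, ?_⟩
    intro s hs hsd
    obtain ⟨hcs, h0s, hls⟩ := hu s hs
    have hee : (r' + 1) * |s - s₀| ≤ ε₀ := by
      have h2 : (r' + 1) * |s - s₀| < (r' + 1) * (ε₀ / (r' + 1)) :=
        mul_lt_mul_of_pos_left hsd (by linarith)
      have h3 : (r' + 1) * (ε₀ / (r' + 1)) = ε₀ := by field_simp
      linarith
    have := hsl (u s) (γ s) ((r' + 1) * |s - s₀|) hcs hls
      (fun t ht => hγdiff s s₀ t ht) (by rw [h0s, h0₀])
      (by positivity) hee 1 h11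
    exact this.2 (by rw [hγ1 s, hγ1 s₀])
  -- global constancy on [0,1]
  have hconst : u 1 1 = u 0 1 := by
    haveI : PreconnectedSpace (Icc (0:ℝ) 1) := Subtype.preconnectedSpace isPreconnected_Icc
    set B : Set (Icc (0:ℝ) 1) := {x | u x.1 1 = u 0 1} with hB
    have hBopen : IsOpen B := by
      rw [isOpen_iff_mem_nhds]
      intro x hx
      obtain ⟨η, hη, hloc'⟩ := hloc x.1 x.2
      have hnb : {y : Icc (0:ℝ) 1 | |y.1 - x.1| < η} ∈ 𝓝 x := by
        apply IsOpen.mem_nhds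
        · have : Continuous (fun y : Icc (0:ℝ) 1 => |y.1 - x.1|) :=
            (continuous_subtype_val.sub continuous_const).abs
          exact isOpen_lt this continuous_const
        · show |x.1 - x.1| < η; simpa using hη
      apply Filter.mem_of_superset hnb
      intro y hy
      show u y.1 1 = u 0 1
      rw [hloc' y.1 y.2 hy]
      exact hx
    have hBclosed : IsClosed B := by
      rw [← isOpen_compl_iff, isOpen_iff_mem_nhds]
      intro x hx
      obtain ⟨η, hη, hloc'⟩ := hloc x.1 x.2
      have hnb : {y : Icc (0:ℝ) 1 | |y.1 - x.1| < η} ∈ 𝓝 x := by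
        apply IsOpen.mem_nhds
        · have : Continuous (fun y : Icc (0:ℝ) 1 => |y.1 - x.1|) :=
            (continuous_subtype_val.sub continuous_const).abs
          exact isOpen_lt this continuous_const
        · show |x.1 - x.1| < η; simpa using hη
      apply Filter.mem_of_superset hnb
      intro y hy hyB
      apply hx
      show u x.1 1 = u 0 1
      rw [← hloc' y.1 y.2 hy]
      exact hyB
    have hB0 : (⟨0, h01⟩ : Icc (0:ℝ) 1) ∈ B := by
      show u (0:ℝ) 1 = u 0 1; rfl
    have := IsClopen.eq_univ ⟨hBclosed, hBopen⟩ ⟨_, hB0⟩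
    have h1B : (⟨1, h11⟩ : Icc (0:ℝ) 1) ∈ B := by rw [this]; trivial
    exact h1B
  -- identify the endpoints
  have hid1 : δ 1 = u 1 1 := by
    obtain ⟨hc₁, h0₁, hl₁⟩ := hu 1 h11
    obtain ⟨ε₀, hε₀, C, hC, hsl⟩ := slave hfd hd hQ zero_le_one hc₁ hl₁ (hγQ 1 h11)
    have hδlift : ∀ t ∈ Icc (0:ℝ) 1, f (δ t) = γ 1 t := by
      intro t _; simp only [hγ]; simp
    have := hsl δ (γ 1) 0 hδc hδlift (fun t ht => by simp) (by rw [h0₁]) le_rfl hε₀.le 1 h11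
    exact this.2 rfl
  have hid0 : u 0 1 = δ 0 := by
    obtain ⟨hc₀, h0₀, hl₀⟩ := hu 0 h01
    obtain ⟨ε₀, hε₀, C, hC, hsl⟩ := slave hfd hd hQ zero_le_one hc₀ hl₀ (hγQ 0 h01)
    have hclift : ∀ t ∈ Icc (0:ℝ) 1, f ((fun _ => δ 0) t) = γ 0 t := by
      intro t _; simp only [hγ]; simp [h0]
    have := hsl (fun _ => δ 0) (γ 0) 0 continuousOn_const hclift
      (fun t ht => by simp) (by rw [h0₀]) le_rfl hε₀.le 1 h11
    exact (this.2 rfl).symm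
  rw [hid1, hconst, hid0]

end Aux

section Main

set_option maxHeartbeats 1000000 in
theorem stmt_10' (f : ℂ → ℂ) (hf : TranscEntire f) (h : eta f ≠ 0) :
    ∃ R > 0, ∀ a : ℂ, R < ‖a‖ →
      ∀ s : TranscSing f (a : OnePoint ℂ), ¬ s.IsIndirect := by
  obtain ⟨hfd, hnp⟩ := hf
  -- extract a positive lower bound for |z f'(z)/f(z)| on {|f| > R₁}
  have hex : ∃ R₁ : ℝ,
      (⨅ z ∈ {z : ℂ | R₁ < ‖f z‖}, (‖z * deriv f z / f z‖₊ : ℝ≥0∞)) ≠ 0 := by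
    by_contra hc
    push_neg at hc
    apply h
    rw [_root_.eta]
    simp only [hc, iSup_const]
  obtain ⟨R₁, hR₁⟩ := hex
  set c' : ℝ≥0∞ :=
    min (⨅ z ∈ {z : ℂ | R₁ < ‖f z‖}, (‖z * deriv f z / f z‖₊ : ℝ≥0∞)) 1 with hc'
  have hc'ne : c' ≠ 0 := by
    intro h0
    rcases min_eq_iff.mp h0 with h1 | h1
    · exact hR₁ h1.1
    · simp at h1
  have hc'top : c' ≠ ⊤ := ne_top_of_le_ne_top (by simp) (min_le_right _ _)
  set c := c'.toReal with hcdef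
  have hcpos : 0 < c := ENNReal.toReal_pos hc'ne hc'top
  have hglob : ∀ z : ℂ, R₁ < ‖f z‖ →
      c * ‖f z‖ ≤ ‖z‖ * ‖deriv f z‖ := by
    intro z hz
    have h1 : c' ≤ (‖z * deriv f z / f z‖₊ : ℝ≥0∞) :=
      le_trans (min_le_left _ _) (biInf_le _ hz)
    have h2 : c ≤ ‖z * deriv f z / f z‖ := by
      have h3 := ENNReal.toReal_mono (by simp) h1
      simpa using h3
    rw [norm_div, norm_mul] at h2
    by_cases hf0 : f z = 0
    · exfalso
      rw [hf0] at h2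
      simp at h2
      linarith
    have hfpos : 0 < ‖f z‖ := norm_pos_iff.mpr hf0
    rw [le_div_iff₀ hfpos] at h2
    calc c * ‖f z‖ = c * ‖f z‖ := by rfl
      _ ≤ ‖z‖ * ‖deriv f z‖ := h2
  set R₀ := max R₁ 0 with hR₀
  have hR₀0 : 0 ≤ R₀ := le_max_right _ _
  refine ⟨R₀ + 1, by linarith, ?_⟩
  intro a ha s hind
  set r := (‖a‖ - R₀) / 2 with hrdef
  have hrhalf : 1/2 < r := by
    simp only [hrdef]; linarith
  have hrpos : 0 < r := by linarith
  have hsol : ∀ ρ : ℝ, 0 < ρ → ∃ z ∈ s.U ρ, f z = a := by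
    intro ρ hρ
    have hnd := hind
    rw [TranscSing.IsIndirect, TranscSing.IsDirect] at hnd
    push_neg at hnd
    obtain ⟨z, hz1, hz2⟩ := hnd ρ hρ
    exact ⟨z, hz1, OnePoint.coe_eq_coe.mp hz2⟩
  have hSopen : IsOpen (f ⁻¹' (Metric.ball a r)) :=
    (Metric.isOpen_ball).preimage hfd.continuous
  obtain ⟨zst, hzstmem, hUr⟩ := s.isComp r hrpos
  have hsph : sphBall (a : OnePoint ℂ) r = Metric.ball a r := rfl
  -- uniqueness of a-points within components of f⁻¹(B(a,r))
  have hkey : ∀ w₁ w₂ : ℂ, f w₁ = a → f w₂ = a →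
      w₂ ∈ connectedComponentIn (f ⁻¹' (Metric.ball a r)) w₁ → w₂ = w₁ := by
    intro w₁ w₂ hw₁ hw₂ hcc
    have hw₁S : w₁ ∈ f ⁻¹' (Metric.ball a r) := by
      simp only [mem_preimage, hw₁]
      exact mem_ball_self hrpos
    obtain ⟨δ, K, hK, hlip, hδ0, hδ1, hδV⟩ := exists_path hSopen hw₁S w₂ hcc
    have hδcOn : ContinuousOn δ (Icc 0 1) := lipcont hK (fun x _ y _ => hlip x y)
    have hgc : ContinuousOn (fun t => dist (f (δ t)) a) (Icc 0 1) :=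
      (hfd.continuous.dist continuous_const).comp_continuousOn hδcOn
    obtain ⟨t₀, ht₀I, ht₀max⟩ :=
      isCompact_Icc.exists_isMaxOn (nonempty_Icc.mpr zero_le_one) hgc
    set r' := dist (f (δ t₀)) a with hr'def
    have hr'0 : 0 ≤ r' := dist_nonneg
    have hr'lt : r' < r := by
      have h1 := connectedComponentIn_subset (f ⁻¹' (Metric.ball a r)) w₁ (hδV t₀ ht₀I)
      simpa [hr'def] using h1
    have himg : ∀ t ∈ Icc (0:ℝ) 1, f (δ t) ∈ closedBall a r' := by
      intro t ht
      exact ht₀max ht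
    have hR₀a : R₀ < ‖a‖ - r := by
      simp only [hrdef]; linarith
    set dd := c * (‖a‖ - r') with hdd
    have hddpos : 0 < dd := mul_pos hcpos (by linarith)
    have hQ : ∀ z, f z ∈ closedBall a r' → dd ≤ ‖z‖ * ‖deriv f z‖ := by
      intro z hz
      have h2 : dist (f z) a ≤ r' := mem_closedBall.mp hz
      have h3 : ‖a‖ - ‖f z‖ ≤ ‖a - f z‖ := norm_sub_norm_le a (f z)
      have h4 : ‖a - f z‖ = dist (f z) a := by rw [dist_eq_norm, norm_sub_rev]
      have h5 : ‖a‖ - r' ≤ ‖f z‖ := by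
        linarith
      have h6 : R₁ < ‖f z‖ := by
        have h7 : R₁ ≤ R₀ := le_max_left _ _
        linarith
      have h8 := hglob z h6
      have h9 : c * (‖a‖ - r') ≤ c * ‖f z‖ :=
        mul_le_mul_of_nonneg_left h5 hcpos.le
      rw [hdd]
      linarith
    -- Lipschitz bound for f ∘ δ
    obtain ⟨RB, hRB⟩ :=
      ((isCompact_Icc.image_of_continuousOn hδcOn).isBounded).subset_closedBall 0
    set RB' := max RB 0 with hRB'
    have hcpt : IsCompact (closedBall (0:ℂ) RB') := isCompact_closedBall 0 _
    obtain ⟨zC, hzC, hzCmax⟩ := hcpt.exists_isMaxOn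
      (nonempty_closedBall.mpr (le_max_right _ _))
      ((entire_deriv_cont hfd).norm.continuousOn)
    set Cf := ‖deriv f zC‖ with hCf
    have hCf0 : 0 ≤ Cf := norm_nonneg _
    have hδin : ∀ t ∈ Icc (0:ℝ) 1, δ t ∈ closedBall (0:ℂ) RB' := by
      intro t ht
      apply closedBall_subset_closedBall (le_max_left _ _)
      exact hRB (mem_image_of_mem δ ht)
    have hmvt : ∀ x ∈ Icc (0:ℝ) 1, ∀ y ∈ Icc (0:ℝ) 1,
        ‖f (δ x) - f (δ y)‖ ≤ Cf * ‖δ x - δ y‖ := by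
      intro x hx y hy
      apply (convex_closedBall (0:ℂ) RB').norm_image_sub_le_of_norm_hasDerivWithin_le
        (fun w _ => ((hfd w).hasDerivAt).hasDerivWithinAt)
        (fun w hw => hzCmax hw) (hδin y hy) (hδin x hx)
    set Mδ := Cf * K + 1 with hMδdef
    have hMδpos : 0 < Mδ := by positivity
    have hδl : ∀ x ∈ Icc (0:ℝ) 1, ∀ y ∈ Icc (0:ℝ) 1,
        ‖f (δ x) - f (δ y)‖ ≤ Mδ * |x - y| := by
      intro x hx y hy
      calc ‖f (δ x) - f (δ y)‖ ≤ Cf * ‖δ x - δ y‖ := hmvt x hx y hy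
        _ ≤ Cf * (K * |x - y|) := mul_le_mul_of_nonneg_left (hlip x y) hCf0
        _ = (Cf * K) * |x - y| := by ring
        _ ≤ Mδ * |x - y| := mul_le_mul_of_nonneg_right (by simp only [hMδdef]; linarith)
            (abs_nonneg _)
    have hfin := key_mono hfd hddpos hQ hMδpos hδcOn hδl himg
      (by rw [hδ0]; exact hw₁) (by rw [hδ1]; exact hw₂)
    rw [hδ0, hδ1] at hfin
    exact hfin
  obtain ⟨z₂, hz₂U, hz₂a⟩ := hsol (1/2) (by norm_num)
  have hz₂Ur : z₂ ∈ s.U r := s.nested (1/2) r (by norm_num) (by linarith) hz₂U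
  have hall : ∀ ρ : ℝ, 0 < ρ → z₂ ∈ s.U ρ := by
    intro ρ hρ
    set ρ' := min ρ (1/2) with hρ'def
    have hρ'pos : 0 < ρ' := lt_min hρ (by norm_num)
    obtain ⟨z', hz'U, hz'a⟩ := hsol ρ' hρ'pos
    have hz'Ur : z' ∈ s.U r :=
      s.nested ρ' r hρ'pos (le_trans (min_le_right _ _) (by linarith)) hz'U
    rw [hUr, hsph] at hz₂Ur hz'Ur
    have hcomp : connectedComponentIn (f ⁻¹' (Metric.ball a r)) zst
        = connectedComponentIn (f ⁻¹' (Metric.ball a r)) z₂ := connectedComponentIn_eq hz₂Ur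
    rw [hcomp] at hz'Ur
    have heq : z' = z₂ := hkey z₂ z' hz₂a hz'a hz'Ur
    have hz₂ρ' : z₂ ∈ s.U ρ' := heq ▸ hz'U
    exact s.nested ρ' ρ hρ'pos (min_le_left _ _) hz₂ρ'
  have hmem : z₂ ∈ ⋂ ρ ∈ Set.Ioi (0:ℝ), s.U ρ := by
    rw [mem_iInter₂]
    exact fun ρ hρ => hall ρ hρ
  rw [s.inter_empty] at hmem
  exact hmem

end Main

/-- If `η_f ≠ 0` then the projections of indirect singularities over finite points are
bounded. -/
theorem stmt_10 (f : ℂ → ℂ) (hf : TranscEntire f) (h : eta f ≠ 0) :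
    ∃ R > 0, ∀ a : ℂ, R < ‖a‖ →
      ∀ s : TranscSing f (a : OnePoint ℂ), ¬ s.IsIndirect := stmt_10' f hf h
end

section
/- The entire function f(z) = e^z · sin(e^z) has an unbounded set of critical values. -/
open Complex Set Metric Filter Topology Bornology
open scoped ENNReal

lemma key_root (C : ℝ) : ∃ u : ℝ, 2 * |C| + 2 ≤ u ∧
    Real.sin u + u * Real.cos u = 0 ∧ C < |u * Real.sin u| := by
  obtain ⟨n, hn⟩ := exists_nat_gt (|C| + 1)
  have hpi := Real.pi_gt_three
  set a : ℝ := (n : ℝ) * (2 * Real.pi) with ha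
  have habs : (0:ℝ) ≤ |C| := abs_nonneg C
  have hn0 : (0:ℝ) < (n:ℝ) := lt_of_le_of_lt (by positivity) hn
  have hage : 2 * |C| + 2 ≤ a := by
    have : (n:ℝ) * 6 ≤ a := by
      have : (6:ℝ) ≤ 2 * Real.pi := by linarith
      nlinarith
    nlinarith
  have hc1 : Real.cos a = 1 := Real.cos_nat_mul_two_pi n
  have hs0 : Real.sin a = 0 := by
    have h := Real.sin_sq_add_cos_sq a
    rw [hc1] at h
    have : Real.sin a ^ 2 = 0 := by linarith
    exact pow_eq_zero_iff two_ne_zero |>.mp this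
  have hga : Real.sin a + a * Real.cos a = a := by rw [hs0, hc1]; ring
  have hgb : Real.sin (a + Real.pi) + (a + Real.pi) * Real.cos (a + Real.pi)
      = -(a + Real.pi) := by
    rw [Real.sin_add_pi, Real.cos_add_pi, hs0, hc1]; ring
  have hcont : ContinuousOn (fun u => Real.sin u + u * Real.cos u)
      (Set.Icc a (a + Real.pi)) := by fun_prop
  have hle : a ≤ a + Real.pi := by linarith
  have h0 : (0:ℝ) ∈ Set.Icc (Real.sin (a + Real.pi) + (a + Real.pi) * Real.cos (a + Real.pi))
      (Real.sin a + a * Real.cos a) := by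
    rw [hga, hgb]; constructor <;> nlinarith
  obtain ⟨u, hu, hgu⟩ := intermediate_value_Icc' hle hcont h0
  simp only at hgu
  refine ⟨u, le_trans hage hu.1, hgu, ?_⟩
  have hu2 : 2 * |C| + 2 ≤ u := le_trans hage hu.1
  have hs : Real.sin u = -(u * Real.cos u) := by linarith
  have hpyth := Real.sin_sq_add_cos_sq u
  have hp : (0:ℝ) < 1 + u ^ 2 := by positivity
  have hc2 : (1 + u ^ 2) * Real.cos u ^ 2 = 1 := by
    rw [hs] at hpyth; linear_combination hpyth
  have h4 : 4 * C ^ 2 ≤ (u - 2) ^ 2 := by nlinarith [_root_.sq_abs C, abs_nonneg C]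
  have key : C ^ 2 * (1 + u ^ 2) < u ^ 4 := by
    have h5 : 4 * C ^ 2 * (1 + u ^ 2) ≤ (u - 2) ^ 2 * (1 + u ^ 2) :=
      mul_le_mul_of_nonneg_right h4 (by positivity)
    nlinarith [sq_nonneg u, abs_nonneg C]
  have h7 : (u * Real.sin u) ^ 2 * (1 + u ^ 2) = u ^ 4 := by
    rw [hs]; linear_combination u ^ 4 * hc2
  have hsq : C ^ 2 < (u * Real.sin u) ^ 2 := by nlinarith [key, h7]
  have : |C| < |u * Real.sin u| := by
    have h1 : |C| ^ 2 < |u * Real.sin u| ^ 2 := by rw [_root_.sq_abs, _root_.sq_abs]; exact hsq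
    exact lt_of_pow_lt_pow_left₀ 2 (abs_nonneg _) h1
  exact lt_of_le_of_lt (le_abs_self C) this

/-- The function `f(z) = e^z sin(e^z)` has an unbounded set of critical values. -/
theorem stmt_14 :
    ¬ IsBounded {a : ℂ | IsCriticalValue (fun z => Complex.exp z * Complex.sin (Complex.exp z)) a} := by
  rw [isBounded_iff_forall_norm_le]
  push_neg
  intro C
  obtain ⟨u, hu, hg, hC⟩ := key_root C
  have hupos : (0:ℝ) < u := by have := abs_nonneg C; linarith
  set w : ℂ := (Real.log u : ℂ) with hw
  have hew : Complex.exp w = (u : ℂ) := by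
    rw [hw, ← Complex.ofReal_exp, Real.exp_log hupos]
  refine ⟨(↑(u * Real.sin u) : ℂ), ⟨w, ?_, ?_⟩, ?_⟩
  · -- derivative is zero
    have h1 : HasDerivAt Complex.exp (Complex.exp w) w := Complex.hasDerivAt_exp w
    have h2 : HasDerivAt (fun z => Complex.sin (Complex.exp z))
        (Complex.cos (Complex.exp w) * Complex.exp w) w :=
      (Complex.hasDerivAt_sin (Complex.exp w)).comp w h1
    have h3 : HasDerivAt (fun z => Complex.exp z * Complex.sin (Complex.exp z))
        (Complex.exp w * Complex.sin (Complex.exp w)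
          + Complex.exp w * (Complex.cos (Complex.exp w) * Complex.exp w)) w := h1.mul h2
    rw [h3.deriv, hew, ← Complex.ofReal_sin, ← Complex.ofReal_cos]
    have : (↑u * ↑(Real.sin u) + ↑u * (↑(Real.cos u) * ↑u) : ℂ)
        = ((u * (Real.sin u + u * Real.cos u) : ℝ) : ℂ) := by push_cast; ring
    rw [this, hg]
    simp
  · -- value
    simp only [hew, ← Complex.ofReal_sin]
    push_cast
    ring
  · rw [Complex.norm_real]; exact hC
end
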